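/- arXiv:2101.03021 — 11 statements merged into one kernel-verified Lean document; each statement's English description precedes it below -/
import Mathlib

section
/- For every compact set K ⊂ ℂ and every ε with 0 < ε < 1, there exists N ∈ ℕ such that for all integers m ≥ n > N, all s ∈ K, and all z ∈ ℂ with |z| ≤ 1, one has |Φ_{n,m}(s,z)| < ε. -/
open Filter

/-- `PhiNest s z n k` is the finite composition
`exp(s - n + exp(s - (n+1) + ⋯ + exp(s - (n+k) + z)⋯))`,
i.e. `Φ_{n, n+k}(s, z)` in the paper's notation. -/
noncomputable def PhiNest (s z : ℂ) : ℕ → ℕ → ℂ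
  | n, 0 => Complex.exp (s - (n : ℂ) + z)
  | n, k + 1 => Complex.exp (s - (n : ℂ) + PhiNest s z (n + 1) k)

/-- `PhiComp s z n m = Φ_{n,m}(s,z)`, the composition of
`z ↦ exp(s - j + z)` for `j = n, …, m` (for `n ≤ m`). -/
noncomputable def PhiComp (s z : ℂ) (n m : ℕ) : ℂ :=
  PhiNest s z n (m - n)

lemma phiNest_key (C ε : ℝ) (hε1 : ε ≤ 1) (k : ℕ) :
    ∀ n : ℕ, (∀ j : ℕ, n ≤ j → Real.exp (C + 1 - j) < ε) →
    ∀ s : ℂ, s.re ≤ C → ∀ z : ℂ, ‖z‖ ≤ 1 →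
      ‖PhiNest s z n k‖ < ε := by
  induction k with
  | zero =>
    intro n h s hs z hz
    have hzre : z.re ≤ 1 := le_trans (Complex.re_le_norm z) hz
    have : ‖PhiNest s z n 0‖ = Real.exp (s.re - n + z.re) := by
      simp [PhiNest, Complex.norm_exp, Complex.add_re, Complex.sub_re]
    rw [this]
    calc Real.exp (s.re - n + z.re) ≤ Real.exp (C + 1 - n) := by
          apply Real.exp_le_exp.2; linarith
      _ < ε := h n le_rfl
  | succ k ih =>
    intro n h s hs z hz
    have hP : ‖PhiNest s z (n + 1) k‖ < ε :=
      ih (n + 1) (fun j hj => h j (by omega)) s hs z hz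
    have hPre : (PhiNest s z (n + 1) k).re ≤ 1 :=
      le_trans (Complex.re_le_norm _) (le_trans hP.le hε1)
    have : ‖PhiNest s z n (k + 1)‖
        = Real.exp (s.re - n + (PhiNest s z (n + 1) k).re) := by
      simp [PhiNest, Complex.norm_exp, Complex.add_re, Complex.sub_re]
    rw [this]
    calc Real.exp (s.re - n + (PhiNest s z (n + 1) k).re)
        ≤ Real.exp (C + 1 - n) := by apply Real.exp_le_exp.2; linarith
      _ < ε := h n le_rfl

theorem phiComp_tail_small (K : Set ℂ) (hK : IsCompact K)
    (ε : ℝ) (hε0 : 0 < ε) (hε1 : ε < 1) :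
    ∃ N : ℕ, ∀ m n : ℕ, n ≤ m → N < n → ∀ s ∈ K, ∀ z : ℂ,
      ‖z‖ ≤ 1 → ‖PhiComp s z n m‖ < ε := by
  obtain ⟨C, hC⟩ := ((hK.image Complex.continuous_re).bddAbove)
  have hC' : ∀ s ∈ K, s.re ≤ C := fun s hs => hC ⟨s, hs, rfl⟩
  refine ⟨⌈C + 1 - Real.log ε⌉₊, fun m n hnm hNn s hs z hz => ?_⟩
  have hexp : ∀ j : ℕ, n ≤ j → Real.exp (C + 1 - j) < ε := by
    intro j hj
    have h1 : C + 1 - Real.log ε ≤ ⌈C + 1 - Real.log ε⌉₊ := Nat.le_ceil _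
    have h2 : (⌈C + 1 - Real.log ε⌉₊ : ℝ) < n := by exact_mod_cast hNn
    have h3 : (n : ℝ) ≤ j := by exact_mod_cast hj
    have : C + 1 - (j : ℝ) < Real.log ε := by linarith
    calc Real.exp (C + 1 - j) < Real.exp (Real.log ε) := Real.exp_lt_exp.2 this
      _ = ε := Real.exp_log hε0
  exact phiNest_key C ε hε1.le (m - n) n hexp s (hC' s hs) z hz
end

section
/- The sequence of entire functions φ_m(s) = Φ_{1,m}(s,0), i.e. the nested exponentials exp(s−1+exp(s−2+···+exp(s−m)···)), converges uniformly on every compact subset of ℂ as m → ∞; the limit φ : ℂ → ℂ is an entire function satisfying exp(s + φ(s)) = φ(s+1) for all s ∈ ℂ. -/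
open Filter

/-- `phiSeq m s = φ_m(s) = Φ_{1,m}(s,0) = exp(s-1+exp(s-2+⋯+exp(s-m)⋯))`. -/
noncomputable def phiSeq (m : ℕ) (s : ℂ) : ℂ :=
  PhiComp s 0 1 m

lemma PhiNest_zero (s z : ℂ) (n : ℕ) : PhiNest s z n 0 = Complex.exp (s - n + z) := rfl
lemma PhiNest_succ (s z : ℂ) (n k : ℕ) :
    PhiNest s z n (k+1) = Complex.exp (s - n + PhiNest s z (n+1) k) := rfl

/-- exp is Lipschitz with constant `e^c` on the halfplane `re ≤ c`. -/
lemma exp_lip {a b : ℂ} {c : ℝ} (ha : a.re ≤ c) (hb : b.re ≤ c) :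
    ‖Complex.exp a - Complex.exp b‖ ≤ Real.exp c * ‖a - b‖ := by
  have := Convex.norm_image_sub_le_of_norm_hasFDerivWithin_le
    (f := Complex.exp)
    (f' := fun x => ContinuousLinearMap.smulRight (1 : ℂ →L[ℂ] ℂ) (Complex.exp x))
    (s := {w : ℂ | w.re ≤ c}) (C := Real.exp c)
    (fun x _ => (Complex.hasDerivAt_exp x).hasFDerivAt.hasFDerivWithinAt)
    (fun x hx => by
      rw [ContinuousLinearMap.norm_smulRight_apply, norm_one, one_mul,
        Complex.norm_exp]
      exact Real.exp_le_exp.2 hx)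
    (convex_halfSpace_re_le c) hb ha
  simpa using this

lemma re_nest_le {s : ℂ} {R : ℝ} (hs : ‖s‖ ≤ R) (n : ℕ) (w : ℂ) :
    (s - n + w).re ≤ R - n + ‖w‖ := by
  simp only [Complex.add_re, Complex.sub_re, Complex.natCast_re]
  have h2 : s.re ≤ ‖s‖ := Complex.re_le_norm s
  have h3 : w.re ≤ ‖w‖ := Complex.re_le_norm w
  linarith

/-- real comparison nest -/
noncomputable def rN (R z : ℝ) : ℕ → ℕ → ℝ
  | n, 0 => Real.exp (R - n + z)
  | n, k + 1 => Real.exp (R - n + rN R z (n + 1) k)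

lemma rN_zero (R z : ℝ) (n : ℕ) : rN R z n 0 = Real.exp (R - n + z) := rfl
lemma rN_succ (R z : ℝ) (n k : ℕ) : rN R z n (k+1) = Real.exp (R - n + rN R z (n+1) k) := rfl

lemma rN_pos (R z : ℝ) (n k : ℕ) : 0 < rN R z n k := by
  cases k <;> exact Real.exp_pos _

lemma rN_mono_z (R : ℝ) {z z' : ℝ} (h : z ≤ z') : ∀ k n, rN R z n k ≤ rN R z' n k := by
  intro k
  induction k with
  | zero => intro n; simp only [rN_zero]; exact Real.exp_le_exp.2 (by linarith)
  | succ k ih => intro n; simp only [rN_succ]; exact Real.exp_le_exp.2 (by linarith [ih (n+1)])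

lemma rN_anti_n (R z : ℝ) : ∀ k n, rN R z (n+1) k ≤ rN R z n k := by
  intro k
  induction k with
  | zero =>
    intro n; simp only [rN_zero]; apply Real.exp_le_exp.2; push_cast; linarith
  | succ k ih =>
    intro n; simp only [rN_succ]; apply Real.exp_le_exp.2
    have := ih (n+1); push_cast; linarith

lemma rN_anti_n' (R z : ℝ) : ∀ n, 1 ≤ n → ∀ k, rN R z n k ≤ rN R z 1 k := by
  intro n hn
  induction n with
  | zero => omega
  | succ n ih =>
    intro k
    rcases Nat.eq_or_lt_of_le hn with h | h
    · simp [← h]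
    · exact (rN_anti_n R z k n).trans (ih (by omega) k)

lemma rN_append (R z : ℝ) :
    ∀ k n, rN R z n (k+1) = rN R (Real.exp (R - (n+k+1 : ℕ) + z)) n k := by
  intro k
  induction k with
  | zero => intro n; simp only [rN_succ, rN_zero]
  | succ k ih =>
    intro n
    rw [rN_succ, ih (n+1), rN_succ]
    congr 3
    push_cast; ring

/-- eventually decreasing -/
lemma rN_decr (R : ℝ) {n k : ℕ} (h : R ≤ n + k) : rN R 1 n (k+1) ≤ rN R 1 n k := by
  rw [rN_append]
  apply rN_mono_z
  rw [Real.exp_le_one_iff]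
  push_cast; linarith

noncomputable def BR (R : ℝ) : ℝ :=
  (Finset.range (⌈R⌉₊ + 1)).sup' (by simp) (rN R 1 1)

lemma le_BR (R : ℝ) : ∀ k, rN R 1 1 k ≤ BR R := by
  intro k
  induction k using Nat.strong_induction_on with
  | _ k ih =>
    rcases le_or_gt k ⌈R⌉₊ with h | h
    · exact Finset.le_sup' _ (Finset.mem_range.2 (by omega))
    · obtain ⟨k', rfl⟩ : ∃ k', k = k' + 1 := ⟨k - 1, by omega⟩
      refine (rN_decr R ?_).trans (ih k' (by omega))
      have h1 : R ≤ (⌈R⌉₊ : ℝ) := Nat.le_ceil R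
      have h2 : ((⌈R⌉₊ : ℝ)) ≤ 1 + k' := by exact_mod_cast by omega
      push_cast
      linarith

lemma rN_le_BR (R : ℝ) {n : ℕ} (hn : 1 ≤ n) (k : ℕ) : rN R 1 n k ≤ BR R :=
  (rN_anti_n' R 1 n hn k).trans (le_BR R k)

lemma BR_pos (R : ℝ) : 0 < BR R := (rN_pos R 1 1 0).trans_le (le_BR R 0)

/-- norm bound by the real nest -/
lemma PhiNest_norm_le (R : ℝ) {s z : ℂ} (hs : ‖s‖ ≤ R) (hz : ‖z‖ ≤ 1) :
    ∀ k n, ‖PhiNest s z n k‖ ≤ rN R 1 n k := by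
  intro k
  induction k with
  | zero =>
    intro n
    rw [PhiNest_zero, rN_zero, Complex.norm_exp]
    exact Real.exp_le_exp.2 ((re_nest_le hs n z).trans (by linarith))
  | succ k ih =>
    intro n
    rw [PhiNest_succ, rN_succ, Complex.norm_exp]
    exact Real.exp_le_exp.2 ((re_nest_le hs n _).trans (by linarith [ih (n+1)]))

/-- bound in the tail region: nests starting at a deep level are small -/
lemma PhiNest_small (R : ℝ) {s z : ℂ} (hs : ‖s‖ ≤ R) (hz : ‖z‖ ≤ 1) :
    ∀ k (n : ℕ), R + 2 ≤ (n : ℝ) → ‖PhiNest s z n k‖ ≤ Real.exp (R - n + 1) := by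
  intro k
  induction k with
  | zero =>
    intro n hn
    rw [PhiNest_zero, Complex.norm_exp]
    exact Real.exp_le_exp.2 ((re_nest_le hs n z).trans (by linarith))
  | succ k ih =>
    intro n hn
    rw [PhiNest_succ, Complex.norm_exp]
    apply Real.exp_le_exp.2
    have h1 : ‖PhiNest s z (n+1) k‖ ≤ Real.exp (R - (n+1) + 1) := by
      have := ih (n+1) (by push_cast; linarith)
      simpa using this
    have h2 : Real.exp (R - (n+1) + 1) ≤ 1 := by
      rw [Real.exp_le_one_iff]; linarith
    exact (re_nest_le hs n _).trans (by linarith)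

/-- The key uniform Lipschitz estimate in the innermost variable. -/
lemma PhiNest_lip (R : ℝ) (hR : 0 ≤ R) {s : ℂ} (hs : ‖s‖ ≤ R) :
    ∀ k n, 1 ≤ n → ∀ z z' : ℂ, ‖z‖ ≤ 1 → ‖z'‖ ≤ 1 →
      ‖PhiNest s z n k - PhiNest s z' n k‖ ≤
        Real.exp (R + BR R) ^ (⌈R⌉₊ + 2 - n) * ‖z - z'‖ := by
  set N := ⌈R⌉₊ + 2 with hNdef
  set a := Real.exp (R + BR R) with hadef
  have ha1 : 1 ≤ a := Real.one_le_exp (by linarith [BR_pos R])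
  have hNR : R + 2 ≤ (N : ℝ) := by
    have : R ≤ (⌈R⌉₊ : ℝ) := Nat.le_ceil R
    push_cast [hNdef]; linarith
  intro k
  induction k with
  | zero =>
    intro n hn z z' hz hz'
    rw [PhiNest_zero, PhiNest_zero]
    have key : ‖Complex.exp (s - n + z) - Complex.exp (s - n + z')‖ ≤
        Real.exp (R - n + 1) * ‖z - z'‖ := by
      have := exp_lip (c := R - n + 1)
        ((re_nest_le hs n z).trans (by linarith))
        ((re_nest_le hs n z').trans (by linarith))
      simpa [add_sub_add_left_eq_sub] using this
    refine key.trans (mul_le_mul_of_nonneg_right ?_ (norm_nonneg _))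
    rcases le_or_gt N n with h | h
    · have : N - n = 0 := by omega
      rw [this, pow_zero, Real.exp_le_one_iff]
      have : (N : ℝ) ≤ (n : ℝ) := by exact_mod_cast h
      linarith
    · calc Real.exp (R - n + 1) ≤ a := by
            rw [hadef, Real.exp_le_exp]
            have : (1:ℝ) ≤ (n:ℝ) := by exact_mod_cast hn
            linarith [BR_pos R]
        _ = a ^ 1 := (pow_one a).symm
        _ ≤ a ^ (N - n) := pow_le_pow_right₀ ha1 (by omega)
  | succ k ih =>
    intro n hn z z' hz hz'
    rw [PhiNest_succ, PhiNest_succ]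
    set A := PhiNest s z (n+1) k with hA
    set A' := PhiNest s z' (n+1) k with hA'
    have hAA' : ‖A - A'‖ ≤ a ^ (N - (n+1)) * ‖z - z'‖ := ih (n+1) (by omega) z z' hz hz'
    rcases le_or_gt N n with h | h
    · -- tail region
      have hNn' : (N : ℝ) ≤ (n : ℝ) := by exact_mod_cast h
      have hnR : R + 2 ≤ ((n+1 : ℕ) : ℝ) := by push_cast; linarith
      have hAle : ‖A‖ ≤ 1 := by
        refine (PhiNest_small R hs hz k (n+1) hnR).trans ?_
        rw [Real.exp_le_one_iff]; push_cast
        have : (N : ℝ) ≤ (n : ℝ) := by exact_mod_cast h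
        linarith
      have hA'le : ‖A'‖ ≤ 1 := by
        refine (PhiNest_small R hs hz' k (n+1) hnR).trans ?_
        rw [Real.exp_le_one_iff]; push_cast
        have : (N : ℝ) ≤ (n : ℝ) := by exact_mod_cast h
        linarith
      have key : ‖Complex.exp (s - n + A) - Complex.exp (s - n + A')‖ ≤
          Real.exp (R - n + 1) * ‖A - A'‖ := by
        have := exp_lip (c := R - n + 1)
          ((re_nest_le hs n A).trans (by linarith))
          ((re_nest_le hs n A').trans (by linarith))
        simpa [add_sub_add_left_eq_sub] using this
      have hNn : N - n = 0 := by omega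
      have hNn1 : N - (n+1) = 0 := by omega
      rw [hNn, pow_zero, one_mul]
      refine key.trans ?_
      have he1 : Real.exp (R - n + 1) ≤ 1 := by
        rw [Real.exp_le_one_iff]
        have : (N : ℝ) ≤ (n : ℝ) := by exact_mod_cast h
        linarith
      calc Real.exp (R - n + 1) * ‖A - A'‖ ≤ 1 * ‖A - A'‖ :=
            mul_le_mul_of_nonneg_right he1 (norm_nonneg _)
        _ = ‖A - A'‖ := one_mul _
        _ ≤ a ^ (N - (n+1)) * ‖z - z'‖ := hAA'
        _ = ‖z - z'‖ := by rw [hNn1, pow_zero, one_mul]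
    · -- head region
      have hAle : ‖A‖ ≤ BR R := (PhiNest_norm_le R hs hz k (n+1)).trans (rN_le_BR R (by omega) k)
      have hA'le : ‖A'‖ ≤ BR R := (PhiNest_norm_le R hs hz' k (n+1)).trans (rN_le_BR R (by omega) k)
      have key : ‖Complex.exp (s - n + A) - Complex.exp (s - n + A')‖ ≤
          Real.exp (R - n + BR R) * ‖A - A'‖ := by
        have := exp_lip (c := R - n + BR R)
          ((re_nest_le hs n A).trans (by linarith))
          ((re_nest_le hs n A').trans (by linarith))
        simpa [add_sub_add_left_eq_sub] using this
      refine key.trans ?_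
      have he1 : Real.exp (R - n + BR R) ≤ a := by
        rw [hadef, Real.exp_le_exp]
        have : (0:ℝ) ≤ (n:ℝ) := by positivity
        linarith
      have hpow : a ^ (N - (n+1)) * a = a ^ (N - n) := by
        rw [← pow_succ]
        congr 1
        omega
      calc Real.exp (R - n + BR R) * ‖A - A'‖ ≤ a * (a ^ (N - (n+1)) * ‖z - z'‖) := by
            apply mul_le_mul he1 hAA' (norm_nonneg _) (by linarith)
        _ = a ^ (N - n) * ‖z - z'‖ := by rw [← hpow]; ring

lemma PhiNest_append (s z : ℂ) :
    ∀ k n, PhiNest s z n (k+1) = PhiNest s (Complex.exp (s - (n+k+1 : ℕ) + z)) n k := by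
  intro k
  induction k with
  | zero => intro n; simp only [PhiNest_succ, PhiNest_zero]
  | succ k ih =>
    intro n
    rw [PhiNest_succ, ih (n+1), PhiNest_succ]
    congr 4
    push_cast; ring

lemma PhiNest_shift (s z : ℂ) :
    ∀ k n, PhiNest (s+1) z (n+1) k = PhiNest s z n k := by
  intro k
  induction k with
  | zero => intro n; rw [PhiNest_zero, PhiNest_zero]; congr 1; push_cast; ring
  | succ k ih =>
    intro n
    rw [PhiNest_succ, PhiNest_succ, ih (n+1)]
    congr 1; push_cast; ring

lemma PhiNest_diff : ∀ k n, Differentiable ℂ (fun s => PhiNest s 0 n k) := by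
  intro k
  induction k with
  | zero =>
    intro n
    simp only [PhiNest_zero]
    exact Complex.differentiable_exp.comp ((differentiable_id.sub_const _).add_const 0)
  | succ k ih =>
    intro n
    simp only [PhiNest_succ]
    exact Complex.differentiable_exp.comp ((differentiable_id.sub_const _).add (ih (n+1)))

lemma phiSeq_diff (m : ℕ) : Differentiable ℂ (phiSeq m) :=
  PhiNest_diff (m - 1) 1

/-- one-step estimate -/
lemma phiSeq_step (R : ℝ) (hR : 0 ≤ R) {s : ℂ} (hs : ‖s‖ ≤ R) {m : ℕ}
    (hm : ⌈R⌉₊ + 2 ≤ m) :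
    ‖phiSeq (m+1) s - phiSeq m s‖ ≤
      Real.exp (R + BR R) ^ (⌈R⌉₊ + 2) * Real.exp (R - m - 1) := by
  obtain ⟨k, rfl⟩ : ∃ k, m = k + 1 := ⟨m - 1, by omega⟩
  have h1 : phiSeq (k+1) s = PhiNest s 0 1 k := rfl
  have h2 : phiSeq (k+1+1) s = PhiNest s 0 1 (k+1) := rfl
  set ε : ℂ := Complex.exp (s - ((1+k+1 : ℕ) : ℂ) + 0) with hε
  have h3 : phiSeq (k+1+1) s = PhiNest s ε 1 k := by rw [h2, PhiNest_append]
  have hεnorm : ‖ε‖ ≤ Real.exp (R - (k+1) - 1) := by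
    rw [hε, Complex.norm_exp]
    apply Real.exp_le_exp.2
    have := re_nest_le hs (1+k+1) (0 : ℂ)
    simp only [norm_zero, add_zero] at this ⊢
    refine this.trans ?_
    push_cast; linarith
  have hεle1 : ‖ε‖ ≤ 1 := by
    refine hεnorm.trans ?_
    rw [Real.exp_le_one_iff]
    have hcl : R ≤ (⌈R⌉₊ : ℝ) := Nat.le_ceil R
    have : ((⌈R⌉₊ : ℕ) : ℝ) + 2 ≤ (k:ℝ) + 1 := by exact_mod_cast hm
    linarith
  have hlip := PhiNest_lip R hR hs k 1 le_rfl ε 0 hεle1 (by simp)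
  rw [h3, h1]
  refine hlip.trans ?_
  rw [sub_zero]
  have hpow : Real.exp (R + BR R) ^ (⌈R⌉₊ + 2 - 1) ≤ Real.exp (R + BR R) ^ (⌈R⌉₊ + 2) := by
    apply pow_le_pow_right₀ (Real.one_le_exp (by linarith [BR_pos R]))
    omega
  have h5 : (0:ℝ) ≤ Real.exp (R + BR R) ^ (⌈R⌉₊ + 2 - 1) := by positivity
  calc Real.exp (R + BR R) ^ (⌈R⌉₊ + 2 - 1) * ‖ε‖
      ≤ Real.exp (R + BR R) ^ (⌈R⌉₊ + 2) * Real.exp (R - (k+1) - 1) := by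
        apply mul_le_mul hpow hεnorm (norm_nonneg _) (by positivity)
    _ = Real.exp (R + BR R) ^ (⌈R⌉₊ + 2) * Real.exp (R - ((k+1:ℕ):ℝ) - 1) := by push_cast; rfl

/-- uniform Cauchy on closed balls -/
lemma phiSeq_uniformCauchy (R : ℝ) (hR : 0 ≤ R) :
    UniformCauchySeqOn (fun m s => phiSeq m s) atTop (Metric.closedBall 0 R) := by
  rw [Metric.uniformCauchySeqOn_iff]
  intro ε hε
  set N := ⌈R⌉₊ + 2 with hN
  set C := Real.exp (R + BR R) ^ N with hC
  set r := Real.exp (-1) with hr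
  have hr0 : 0 ≤ r := (Real.exp_pos _).le
  have hr1 : r < 1 := by
    rw [hr, show (1:ℝ) = Real.exp 0 by simp]
    exact Real.exp_lt_exp.2 (by norm_num)
  set D := C * Real.exp R / (1 - r) with hD
  have key : ∀ q p : ℕ, N ≤ q → q ≤ p → ∀ s ∈ Metric.closedBall (0:ℂ) R,
      dist (phiSeq q s) (phiSeq p s) ≤ D * r ^ q := by
    intro q p hq hqp s hsball
    have hs : ‖s‖ ≤ R := by simpa using hsball
    have step : ∀ {j : ℕ}, q ≤ j → j < p →
        dist (phiSeq j s) (phiSeq (j+1) s) ≤ C * Real.exp R * r ^ j := by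
      intro j hj _
      rw [dist_comm, dist_eq_norm]
      refine (phiSeq_step R hR hs (by omega)).trans ?_
      have : Real.exp (R - j - 1) ≤ Real.exp R * r ^ j := by
        rw [hr, ← Real.exp_nat_mul, ← Real.exp_add]
        apply Real.exp_le_exp.2
        have : ((j:ℝ)) * (-1) = -(j:ℝ) := by ring
        rw [this]; linarith
      calc C * Real.exp (R - j - 1) ≤ C * (Real.exp R * r ^ j) := by
            apply mul_le_mul_of_nonneg_left this (by positivity)
        _ = C * Real.exp R * r ^ j := by ring
    have hsum := dist_le_Ico_sum_of_dist_le (f := fun j => phiSeq j s) hqp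
      (d := fun j => C * Real.exp R * r ^ j) (fun hj hj' => step hj hj')
    refine hsum.trans ?_
    rw [← Finset.mul_sum]
    have hgeom : ∑ i ∈ Finset.Ico q p, r ^ i ≤ r ^ q / (1 - r) :=
      geom_sum_Ico_le_of_lt_one hr0 hr1
    calc C * Real.exp R * ∑ i ∈ Finset.Ico q p, r ^ i
        ≤ C * Real.exp R * (r ^ q / (1 - r)) := by
          apply mul_le_mul_of_nonneg_left hgeom (by positivity)
      _ = D * r ^ q := by rw [hD]; ring
  have htend : Tendsto (fun q : ℕ => D * r ^ q) atTop (nhds 0) := by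
    simpa using (tendsto_pow_atTop_nhds_zero_of_lt_one hr0 hr1).const_mul D
  have hev : ∀ᶠ q : ℕ in atTop, D * r ^ q < ε := htend.eventually (gt_mem_nhds hε)
  obtain ⟨M, hM⟩ := (hev.and (eventually_ge_atTop N)).exists_forall_of_atTop
  refine ⟨M, fun p hp q hq s hsball => ?_⟩
  rcases le_total p q with h | h
  · exact lt_of_le_of_lt (key p q (hM p hp).2 h s hsball) (hM p hp).1
  · rw [dist_comm]
    exact lt_of_le_of_lt (key q p (hM q hq).2 h s hsball) (hM q hq).1

theorem phiSeq_tendsto_entire :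
    ∃ φ : ℂ → ℂ,
      (∀ K : Set ℂ, IsCompact K →
        TendstoUniformlyOn (fun m s => phiSeq m s) φ atTop K) ∧
      Differentiable ℂ φ ∧
      ∀ s : ℂ, Complex.exp (s + φ s) = φ (s + 1) := by
  have hcs : ∀ x : ℂ, CauchySeq fun m => phiSeq m x := by
    intro x
    exact (phiSeq_uniformCauchy ‖x‖ (norm_nonneg x)).cauchySeq
      (show x ∈ Metric.closedBall 0 ‖x‖ by
        simp [Metric.mem_closedBall])
  choose φ hφ using fun x => cauchySeq_tendsto_of_complete (hcs x)
  have hTU : ∀ K : Set ℂ, IsCompact K →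
      TendstoUniformlyOn (fun m s => phiSeq m s) φ atTop K := by
    intro K hK
    obtain ⟨R, hR0, hKR⟩ := hK.isBounded.subset_closedBall_lt 0 0
    exact ((phiSeq_uniformCauchy R hR0.le).tendstoUniformlyOn_of_tendsto
      (fun x _ => hφ x)).mono hKR
  refine ⟨φ, hTU, ?_, ?_⟩
  · have hTLU : TendstoLocallyUniformlyOn (fun m s => phiSeq m s) φ atTop Set.univ := by
      rw [tendstoLocallyUniformlyOn_iff_forall_isCompact isOpen_univ]
      exact fun K _ hK => hTU K hK
    have := hTLU.differentiableOn
      (Eventually.of_forall fun m => (phiSeq_diff m).differentiableOn) isOpen_univ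
    rwa [← differentiableOn_univ]
  · intro s
    have heq : ∀ k : ℕ, phiSeq (k+2) (s+1) = Complex.exp (s + phiSeq (k+1) s) := by
      intro k
      show PhiNest (s+1) 0 1 (k+1) = Complex.exp (s + PhiNest s 0 1 k)
      rw [PhiNest_succ, PhiNest_shift]
      congr 1
      push_cast; ring
    have h1 : Tendsto (fun k : ℕ => phiSeq (k+2) (s+1)) atTop (nhds (φ (s+1))) :=
      (hφ (s+1)).comp (tendsto_add_atTop_nat 2)
    have h2 : Tendsto (fun k : ℕ => Complex.exp (s + phiSeq (k+1) s)) atTop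
        (nhds (Complex.exp (s + φ s))) := by
      have hin : Tendsto (fun k : ℕ => s + phiSeq (k+1) s) atTop (nhds (s + φ s)) :=
        tendsto_const_nhds.add ((hφ s).comp (tendsto_add_atTop_nat 1))
      exact (Complex.continuous_exp.continuousAt.tendsto).comp hin
    rw [funext heq] at h1
    exact tendsto_nhds_unique h2 h1
end

section
/- For every compact set K ⊂ ℂ there exist a constant A > 0 and an integer N such that for all m > N and all s ∈ K, |φ_{m+1}(s) − φ_m(s)| ≤ A·e^{−m}. -/
open Filter

lemma phiNest_zero (s z : ℂ) (n : ℕ) : PhiNest s z n 0 = Complex.exp (s - (n:ℂ) + z) := rfl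

lemma phiNest_succ (s z : ℂ) (n k : ℕ) :
    PhiNest s z n (k+1) = Complex.exp (s - (n:ℂ) + PhiNest s z (n+1) k) := rfl

lemma abs_exp_sub_exp_le {a b : ℂ} {M : ℝ} (ha : a.re ≤ M) (hb : b.re ≤ M) :
    ‖Complex.exp a - Complex.exp b‖ ≤ ‖a - b‖ * Real.exp M := by
  have := Convex.norm_image_sub_le_of_norm_deriv_le (f := Complex.exp) (C := Real.exp M)
    (s := {z : ℂ | z.re ≤ M}) (fun x _ => Complex.differentiable_exp x)
    (fun x hx => by
      rw [Complex.deriv_exp, Complex.norm_exp]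
      exact Real.exp_le_exp.2 hx)
    (convex_halfSpace_re_le M) hb ha
  simpa [mul_comm] using this

lemma phiNest_split (s z : ℂ) (b : ℕ) : ∀ a n,
    PhiNest s z n (a + b + 1) = PhiNest s (PhiNest s z (n + a + 1) b) n a := by
  intro a
  induction a with
  | zero => intro n; simp [phiNest_succ, phiNest_zero]
  | succ a ih =>
    intro n
    have h1 : a + 1 + b + 1 = (a + b + 1) + 1 := by omega
    have h2 : n + 1 + a + 1 = n + (a + 1) + 1 := by omega
    rw [h1, phiNest_succ, ih (n+1), h2, phiNest_succ]

/-- Value bound in the tail region `n ≥ R + 2`. -/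
lemma phiNest_tail_abs {R : ℝ} : ∀ (k n : ℕ) (s z : ℂ), s.re ≤ R → R + 2 ≤ (n:ℝ) →
    ‖z‖ ≤ 1 → ‖PhiNest s z n k‖ ≤ Real.exp (R - n + 1) := by
  intro k
  induction k with
  | zero =>
    intro n s z hs hn hz
    rw [phiNest_zero, Complex.norm_exp]
    apply Real.exp_le_exp.2
    have hzre : z.re ≤ 1 := le_trans (Complex.re_le_norm z) hz
    simp only [Complex.add_re, Complex.sub_re, Complex.natCast_re]
    linarith
  | succ k ih =>
    intro n s z hs hn hz
    have hn1 : R + 2 ≤ ((n+1 : ℕ):ℝ) := by push_cast; linarith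
    have hinner := ih (n+1) s z hs hn1 hz
    push_cast at hinner
    have h1 : ‖PhiNest s z (n+1) k‖ ≤ 1 := by
      refine hinner.trans ?_
      calc Real.exp (R - ((n:ℝ)+1) + 1) ≤ Real.exp 0 := Real.exp_le_exp.2 (by linarith)
        _ = 1 := Real.exp_zero
    rw [phiNest_succ, Complex.norm_exp]
    apply Real.exp_le_exp.2
    have : (PhiNest s z (n+1) k).re ≤ 1 := le_trans (Complex.re_le_norm _) h1
    simp only [Complex.add_re, Complex.sub_re, Complex.natCast_re]
    linarith

lemma phiNest_tail_abs_le_one {R : ℝ} (k n : ℕ) (s z : ℂ) (hs : s.re ≤ R)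
    (hn : R + 2 ≤ (n:ℝ)) (hz : ‖z‖ ≤ 1) : ‖PhiNest s z n k‖ ≤ 1 := by
  refine (phiNest_tail_abs k n s z hs hn hz).trans ?_
  calc Real.exp (R - n + 1) ≤ Real.exp 0 := Real.exp_le_exp.2 (by linarith)
    _ = 1 := Real.exp_zero

/-- Contraction in the tail region. -/
lemma phiNest_tail_contract {R : ℝ} : ∀ (k n : ℕ) (s z1 z2 : ℂ), s.re ≤ R → R + 2 ≤ (n:ℝ) →
    ‖z1‖ ≤ 1 → ‖z2‖ ≤ 1 →
    ‖PhiNest s z1 n k - PhiNest s z2 n k‖ ≤ ‖z1 - z2‖ := by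
  intro k
  induction k with
  | zero =>
    intro n s z1 z2 hs hn h1 h2
    rw [phiNest_zero, phiNest_zero]
    have ha : (s - (n:ℂ) + z1).re ≤ R - n + 1 := by
      have := le_trans (Complex.re_le_norm z1) h1
      simp only [Complex.add_re, Complex.sub_re, Complex.natCast_re]; linarith
    have hb : (s - (n:ℂ) + z2).re ≤ R - n + 1 := by
      have := le_trans (Complex.re_le_norm z2) h2
      simp only [Complex.add_re, Complex.sub_re, Complex.natCast_re]; linarith
    have := abs_exp_sub_exp_le ha hb
    have heq : s - (n:ℂ) + z1 - (s - (n:ℂ) + z2) = z1 - z2 := by ring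
    rw [heq] at this
    refine this.trans ?_
    have hle : Real.exp (R - n + 1) ≤ 1 := by
      calc Real.exp (R - n + 1) ≤ Real.exp 0 := Real.exp_le_exp.2 (by linarith)
        _ = 1 := Real.exp_zero
    nlinarith [norm_nonneg (z1 - z2), Real.exp_pos (R - n + 1)]
  | succ k ih =>
    intro n s z1 z2 hs hn h1 h2
    have hn1 : R + 2 ≤ ((n+1 : ℕ):ℝ) := by push_cast; linarith
    set w1 := PhiNest s z1 (n+1) k
    set w2 := PhiNest s z2 (n+1) k
    have hw1 : ‖w1‖ ≤ 1 := phiNest_tail_abs_le_one k (n+1) s z1 hs hn1 h1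
    have hw2 : ‖w2‖ ≤ 1 := phiNest_tail_abs_le_one k (n+1) s z2 hs hn1 h2
    rw [phiNest_succ, phiNest_succ]
    have ha : (s - (n:ℂ) + w1).re ≤ R - n + 1 := by
      have := le_trans (Complex.re_le_norm w1) hw1
      simp only [Complex.add_re, Complex.sub_re, Complex.natCast_re]; linarith
    have hb : (s - (n:ℂ) + w2).re ≤ R - n + 1 := by
      have := le_trans (Complex.re_le_norm w2) hw2
      simp only [Complex.add_re, Complex.sub_re, Complex.natCast_re]; linarith
    have key := abs_exp_sub_exp_le ha hb
    have heq : s - (n:ℂ) + w1 - (s - (n:ℂ) + w2) = w1 - w2 := by ring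
    rw [heq] at key
    have hle : Real.exp (R - n + 1) ≤ 1 := by
      calc Real.exp (R - n + 1) ≤ Real.exp 0 := Real.exp_le_exp.2 (by linarith)
        _ = 1 := Real.exp_zero
    have hww : ‖w1 - w2‖ ≤ ‖z1 - z2‖ := ih (n+1) s z1 z2 hs hn1 h1 h2
    calc ‖Complex.exp (s - (n:ℂ) + w1) - Complex.exp (s - (n:ℂ) + w2)‖
        ≤ ‖w1 - w2‖ * Real.exp (R - n + 1) := key
      _ ≤ ‖z1 - z2‖ * 1 := by
          apply mul_le_mul hww hle (Real.exp_pos _).le (norm_nonneg _)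
      _ = ‖z1 - z2‖ := mul_one _

/-- Uniform value bound (any level). -/
lemma phiNest_abs_bound (R : ℝ) : ∀ k n, ∃ V : ℝ, ∀ (s z : ℂ), s.re ≤ R →
    ‖z‖ ≤ 1 → ‖PhiNest s z n k‖ ≤ V := by
  intro k
  induction k with
  | zero =>
    intro n
    refine ⟨Real.exp (R + 1), fun s z hs hz => ?_⟩
    rw [phiNest_zero, Complex.norm_exp]
    apply Real.exp_le_exp.2
    have := le_trans (Complex.re_le_norm z) hz
    have hn : (0:ℝ) ≤ (n:ℝ) := Nat.cast_nonneg n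
    simp only [Complex.add_re, Complex.sub_re, Complex.natCast_re]
    linarith
  | succ k ih =>
    intro n
    obtain ⟨V, hV⟩ := ih (n+1)
    refine ⟨Real.exp (R + max V 0), fun s z hs hz => ?_⟩
    rw [phiNest_succ, Complex.norm_exp]
    apply Real.exp_le_exp.2
    have habs := hV s z hs hz
    have := le_trans (Complex.re_le_norm (PhiNest s z (n+1) k)) habs
    have hn : (0:ℝ) ≤ (n:ℝ) := Nat.cast_nonneg n
    have : (PhiNest s z (n+1) k).re ≤ max V 0 := le_trans this (le_max_left _ _)
    simp only [Complex.add_re, Complex.sub_re, Complex.natCast_re]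
    linarith

/-- Uniform Lipschitz bound (any level). -/
lemma phiNest_lipschitz (R : ℝ) : ∀ k n, ∃ L : ℝ, 0 < L ∧ ∀ (s z1 z2 : ℂ), s.re ≤ R →
    ‖z1‖ ≤ 1 → ‖z2‖ ≤ 1 →
    ‖PhiNest s z1 n k - PhiNest s z2 n k‖ ≤ L * ‖z1 - z2‖ := by
  intro k
  induction k with
  | zero =>
    intro n
    refine ⟨Real.exp (R + 1), Real.exp_pos _, fun s z1 z2 hs h1 h2 => ?_⟩
    rw [phiNest_zero, phiNest_zero]
    have ha : (s - (n:ℂ) + z1).re ≤ R + 1 := by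
      have := le_trans (Complex.re_le_norm z1) h1
      have hn : (0:ℝ) ≤ (n:ℝ) := Nat.cast_nonneg n
      simp only [Complex.add_re, Complex.sub_re, Complex.natCast_re]; linarith
    have hb : (s - (n:ℂ) + z2).re ≤ R + 1 := by
      have := le_trans (Complex.re_le_norm z2) h2
      have hn : (0:ℝ) ≤ (n:ℝ) := Nat.cast_nonneg n
      simp only [Complex.add_re, Complex.sub_re, Complex.natCast_re]; linarith
    have key := abs_exp_sub_exp_le ha hb
    have heq : s - (n:ℂ) + z1 - (s - (n:ℂ) + z2) = z1 - z2 := by ring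
    rw [heq] at key
    linarith [key, mul_comm (‖z1 - z2‖) (Real.exp (R + 1))]
  | succ k ih =>
    intro n
    obtain ⟨V, hV⟩ := phiNest_abs_bound R k (n+1)
    obtain ⟨L, hL, hLip⟩ := ih (n+1)
    refine ⟨Real.exp (R + max V 0) * L, by positivity, fun s z1 z2 hs h1 h2 => ?_⟩
    set w1 := PhiNest s z1 (n+1) k
    set w2 := PhiNest s z2 (n+1) k
    have hw1 : w1.re ≤ max V 0 :=
      le_trans (le_trans (Complex.re_le_norm w1) (hV s z1 hs h1)) (le_max_left _ _)
    have hw2 : w2.re ≤ max V 0 :=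
      le_trans (le_trans (Complex.re_le_norm w2) (hV s z2 hs h2)) (le_max_left _ _)
    have hn : (0:ℝ) ≤ (n:ℝ) := Nat.cast_nonneg n
    rw [phiNest_succ, phiNest_succ]
    have ha : (s - (n:ℂ) + w1).re ≤ R + max V 0 := by
      simp only [Complex.add_re, Complex.sub_re, Complex.natCast_re]; linarith
    have hb : (s - (n:ℂ) + w2).re ≤ R + max V 0 := by
      simp only [Complex.add_re, Complex.sub_re, Complex.natCast_re]; linarith
    have key := abs_exp_sub_exp_le ha hb
    have heq : s - (n:ℂ) + w1 - (s - (n:ℂ) + w2) = w1 - w2 := by ring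
    rw [heq] at key
    have hww : ‖w1 - w2‖ ≤ L * ‖z1 - z2‖ := hLip s z1 z2 hs h1 h2
    calc ‖Complex.exp (s - (n:ℂ) + w1) - Complex.exp (s - (n:ℂ) + w2)‖
        ≤ ‖w1 - w2‖ * Real.exp (R + max V 0) := key
      _ ≤ (L * ‖z1 - z2‖) * Real.exp (R + max V 0) := by
          exact mul_le_mul_of_nonneg_right hww (Real.exp_pos _).le
      _ = Real.exp (R + max V 0) * L * ‖z1 - z2‖ := by ring

theorem phiSeq_successive_difference_bound (K : Set ℂ) (hK : IsCompact K) :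
    ∃ A : ℝ, 0 < A ∧ ∃ N : ℕ, ∀ m : ℕ, N < m → ∀ s ∈ K,
      ‖phiSeq (m + 1) s - phiSeq m s‖ ≤ A * Real.exp (-(m : ℝ)) := by
  obtain ⟨r, hr⟩ := hK.isBounded.subset_closedBall 0
  set R : ℝ := max r 0 with hRdef
  have hR : 0 ≤ R := le_max_right _ _
  have hsre : ∀ s ∈ K, s.re ≤ R := by
    intro s hs
    have : ‖s‖ ≤ r := by
      have := hr hs
      simpa [Complex.dist_eq] using this
    exact le_trans (Complex.re_le_norm s) (le_trans this (le_max_left _ _))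
  set N0 : ℕ := ⌈R⌉₊ + 2 with hN0def
  have hN0 : R + 2 ≤ (N0:ℝ) := by
    have := Nat.le_ceil R
    push_cast [hN0def]
    linarith
  have hN0two : 2 ≤ N0 := by omega
  obtain ⟨L, hL, hLip⟩ := phiNest_lipschitz R (N0 - 2) 1
  refine ⟨L * Real.exp (R - 1), by positivity, N0, fun m hm s hs => ?_⟩
  have hsR := hsre s hs
  have hmN : N0 ≤ m := le_of_lt hm
  -- rewrite phiSeq m and phiSeq (m+1)
  have hsplit1 : m - 1 = (N0 - 2) + (m - N0) + 1 := by omega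
  have hsplit2 : m + 1 - 1 = (N0 - 2) + ((m - N0) + 1) + 1 := by omega
  have hidx : 1 + (N0 - 2) + 1 = N0 := by omega
  set w2 := PhiNest s 0 N0 (m - N0) with hw2def
  have e1 : phiSeq m s = PhiNest s w2 1 (N0 - 2) := by
    rw [phiSeq, PhiComp, hsplit1, phiNest_split, hidx]
  set z1 := Complex.exp (s - ((m + 1 : ℕ):ℂ) + 0) with hz1def
  have hkey := phiNest_split s 0 0 (m - N0) N0
  rw [show N0 + (m - N0) + 1 = m + 1 by omega] at hkey
  rw [phiNest_zero] at hkey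
  set w1 := PhiNest s z1 N0 (m - N0) with hw1def
  have e2 : phiSeq (m + 1) s = PhiNest s w1 1 (N0 - 2) := by
    rw [phiSeq, PhiComp, hsplit2, phiNest_split, hidx]
    rw [show (m - N0) + 1 = (m - N0) + 0 + 1 by omega, hkey]
  -- bounds
  have hz1abs : ‖z1‖ ≤ Real.exp (R - m - 1) := by
    rw [hz1def, Complex.norm_exp]
    apply Real.exp_le_exp.2
    have : ((m + 1 : ℕ):ℂ).re = (m:ℝ) + 1 := by push_cast; simp
    simp only [Complex.add_re, Complex.sub_re, Complex.zero_re, this]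
    linarith
  have hmR : R + 2 ≤ (m:ℝ) := le_trans hN0 (by exact_mod_cast hmN)
  have hz1le1 : ‖z1‖ ≤ 1 := by
    refine hz1abs.trans ?_
    calc Real.exp (R - m - 1) ≤ Real.exp 0 := Real.exp_le_exp.2 (by linarith)
      _ = 1 := Real.exp_zero
  have h0le1 : ‖(0:ℂ)‖ ≤ 1 := by simp
  have hw1le : ‖w1‖ ≤ 1 := phiNest_tail_abs_le_one _ _ s z1 hsR hN0 hz1le1
  have hw2le : ‖w2‖ ≤ 1 := phiNest_tail_abs_le_one _ _ s 0 hsR hN0 h0le1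
  have hww : ‖w1 - w2‖ ≤ Real.exp (R - m - 1) := by
    refine le_trans (phiNest_tail_contract (m - N0) N0 s z1 0 hsR hN0 hz1le1 h0le1) ?_
    simpa using hz1abs
  rw [e1, e2]
  calc ‖PhiNest s w1 1 (N0 - 2) - PhiNest s w2 1 (N0 - 2)‖
      ≤ L * ‖w1 - w2‖ := hLip s w1 w2 hsR hw1le hw2le
    _ ≤ L * Real.exp (R - m - 1) := mul_le_mul_of_nonneg_left hww hL.le
    _ = L * Real.exp (R - 1) * Real.exp (-(m:ℝ)) := by
        rw [mul_assoc, ← Real.exp_add]; ring_nf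
end

section
/- If φ : ℂ → ℂ is the locally uniform limit of the functions φ_m, then φ is real-valued on ℝ, φ(t) > 0 for all real t, φ is strictly increasing on ℝ, and φ(t) → ∞ as t → ∞. -/
open Filter Topology

noncomputable def RNest (s z : ℝ) : ℕ → ℕ → ℝ
  | n, 0 => Real.exp (s - (n : ℝ) + z)
  | n, k + 1 => Real.exp (s - (n : ℝ) + RNest s z (n + 1) k)

lemma rnest_eq (s z : ℝ) : ∀ k n, PhiNest (s : ℂ) (z : ℂ) n k = ((RNest s z n k : ℝ) : ℂ) := by
  intro k
  induction k with
  | zero => intro n; simp [PhiNest, RNest, ← Complex.ofReal_exp]; push_cast; ring_nf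
  | succ k ih =>
      intro n
      simp [PhiNest, RNest, ih (n+1), ← Complex.ofReal_exp]
      push_cast; ring_nf

lemma rnest_pos (s z : ℝ) (n k : ℕ) : 0 < RNest s z n k := by
  cases k <;> exact Real.exp_pos _

lemma rnest_ge (s : ℝ) (n k : ℕ) : Real.exp (s - n) ≤ RNest s 0 n k := by
  cases k with
  | zero => simp [RNest]
  | succ k =>
      simp only [RNest]
      exact Real.exp_le_exp.2 (by nlinarith [rnest_pos s 0 (n+1) k])

lemma rnest_mono {s s' : ℝ} (h : s ≤ s') : ∀ k n, RNest s 0 n k ≤ RNest s' 0 n k := by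
  intro k
  induction k with
  | zero => intro n; exact Real.exp_le_exp.2 (by linarith)
  | succ k ih =>
      intro n
      exact Real.exp_le_exp.2 (by have := ih (n+1); linarith)

lemma rnest_diff {s s' : ℝ} (h : s ≤ s') (n k : ℕ) :
    RNest s 0 n k + Real.exp (s - n) * (s' - s) ≤ RNest s' 0 n k := by
  cases k with
  | zero =>
      simp only [RNest, add_zero]
      have h1 : Real.exp (s' - n) = Real.exp (s - n) * Real.exp (s' - s) := by
        rw [← Real.exp_add]; ring_nf
      have h2 : 1 + (s' - s) ≤ Real.exp (s' - s) := by have := Real.add_one_le_exp (s' - s); linarith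
      nlinarith [Real.exp_pos (s - n)]
  | succ k =>
      simp only [RNest]
      set A := RNest s 0 (n+1) k with hA
      set A' := RNest s' 0 (n+1) k with hA'
      have hAA : A ≤ A' := rnest_mono h _ _
      have hA0 : 0 < A := rnest_pos _ _ _ _
      have h1 : Real.exp (s' - n + A') = Real.exp (s - n + A) * Real.exp ((s' - s) + (A' - A)) := by
        rw [← Real.exp_add]; ring_nf
      have h2 : 1 + ((s' - s) + (A' - A)) ≤ Real.exp ((s' - s) + (A' - A)) := by
        have := Real.add_one_le_exp ((s' - s) + (A' - A)); linarith
      have h3 : Real.exp (s - n) ≤ Real.exp (s - n + A) := Real.exp_le_exp.2 (by linarith)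
      nlinarith [Real.exp_pos (s - n), Real.exp_pos (s - n + A)]

lemma phiSeq_real (m : ℕ) (t : ℝ) :
    phiSeq m (t : ℂ) = ((RNest t 0 1 (m - 1) : ℝ) : ℂ) := by
  have : ((0:ℝ) : ℂ) = 0 := by norm_num
  rw [phiSeq, PhiComp, ← this, rnest_eq]

theorem phi_real_positive_strictMono_tendsto (φ : ℂ → ℂ)
    (hlim : ∀ K : Set ℂ, IsCompact K →
      TendstoUniformlyOn (fun m s => phiSeq m s) φ atTop K) :
    (∀ t : ℝ, (φ (t : ℂ)).im = 0) ∧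
    (∀ t : ℝ, 0 < (φ (t : ℂ)).re) ∧
    StrictMono (fun t : ℝ => (φ (t : ℂ)).re) ∧
    Tendsto (fun t : ℝ => (φ (t : ℂ)).re) atTop atTop := by
  have hpt : ∀ t : ℝ, Tendsto (fun m => ((RNest t 0 1 (m - 1) : ℝ) : ℂ)) atTop (𝓝 (φ (t : ℂ))) := by
    intro t
    have := (hlim {(t:ℂ)} isCompact_singleton).tendsto_at (Set.mem_singleton _)
    simpa [phiSeq_real] using this
  have hre : ∀ t : ℝ, Tendsto (fun m => RNest t 0 1 (m - 1)) atTop (𝓝 ((φ (t : ℂ)).re)) := by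
    intro t
    have h1 := (Complex.continuous_re.tendsto _).comp (hpt t)
    simpa only [Function.comp_def, Complex.ofReal_re] using h1
  have him : ∀ t : ℝ, (φ (t : ℂ)).im = 0 := by
    intro t
    have h1 := (Complex.continuous_im.tendsto _).comp (hpt t)
    simp only [Function.comp_def, Complex.ofReal_im] at h1
    exact (tendsto_nhds_unique tendsto_const_nhds h1).symm
  have hlb : ∀ t : ℝ, Real.exp (t - 1) ≤ (φ (t : ℂ)).re := by
    intro t
    refine ge_of_tendsto' (hre t) fun m => ?_
    simpa using rnest_ge t 1 (m - 1)
  refine ⟨him, fun t => lt_of_lt_of_le (Real.exp_pos _) (hlb t), ?_, ?_⟩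
  · intro t t' ht
    have key : (φ (t : ℂ)).re + Real.exp (t - 1) * (t' - t) ≤ (φ (t' : ℂ)).re := by
      have hdiff : Tendsto (fun m => RNest t 0 1 (m-1) + Real.exp (t - 1) * (t' - t))
          atTop (𝓝 ((φ (t : ℂ)).re + Real.exp (t - 1) * (t' - t))) :=
        (hre t).add tendsto_const_nhds
      refine le_of_tendsto_of_tendsto' hdiff (hre t') fun m => ?_
      have := rnest_diff (le_of_lt ht) 1 (m - 1)
      simpa using this
    have : 0 < Real.exp (t - 1) * (t' - t) :=
      mul_pos (Real.exp_pos _) (by linarith)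
    simpa using lt_of_lt_of_le (by linarith) key
  · refine tendsto_atTop_mono hlb ?_
    exact Real.tendsto_exp_atTop.comp (tendsto_atTop_add_const_right _ _ tendsto_id)
end

section
/- For every integer n ≥ 1 and every real t ≥ T, one has |τ_{n+1}(t) − τ_n(t)| ≤ (t + n) / ∏_{k=1}^{n} φ(t+k). -/
open Filter

/-- The correction terms `τ_n` built from a real function `f` (the restriction
of `φ` to the real line): `τ_0 = 0`, `τ_{n+1}(t) = t + log(1 + τ_n(t+1)/f(t+1))`. -/
noncomputable def tauSeq (f : ℝ → ℝ) : ℕ → ℝ → ℝ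
  | 0 => fun _ => 0
  | n + 1 => fun t => t + Real.log (1 + tauSeq f n (t + 1) / f (t + 1))

lemma my_log_abs_sub (a b : ℝ) (ha : 0 ≤ a) (hb : 0 ≤ b) :
    |Real.log (1 + a) - Real.log (1 + b)| ≤ |a - b| := by
  have key : ∀ x y : ℝ, 0 ≤ y → y ≤ x →
      Real.log (1 + x) - Real.log (1 + y) ≤ x - y := by
    intro x y hy hxy
    have h1y : (0:ℝ) < 1 + y := by linarith
    have h1x : (0:ℝ) < 1 + x := by linarith
    have h := Real.log_le_sub_one_of_pos (x := (1+x)/(1+y)) (by positivity)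
    rw [Real.log_div (by positivity) (by positivity)] at h
    have h3 : (1+x)/(1+y) - 1 ≤ x - y := by
      rw [div_sub_one h1y.ne', div_le_iff₀ h1y]
      nlinarith
    linarith
  rw [abs_sub_le_iff]
  rcases le_total b a with h | h
  · refine ⟨le_trans (key a b hb h) (le_abs_self _), ?_⟩
    have : Real.log (1 + b) ≤ Real.log (1 + a) :=
      Real.log_le_log (by linarith) (by linarith)
    have := abs_nonneg (a - b)
    linarith
  · constructor
    · have : Real.log (1 + a) ≤ Real.log (1 + b) :=
        Real.log_le_log (by linarith) (by linarith)
      have := abs_nonneg (a - b)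
      linarith
    · calc Real.log (1 + b) - Real.log (1 + a) ≤ b - a := key b a ha h
        _ ≤ |a - b| := by rw [abs_sub_comm]; exact le_abs_self _

lemma my_main (f : ℝ → ℝ) (T : ℝ) (hT : 0 ≤ T) (hT1 : ∀ t : ℝ, T ≤ t → 1 < f t) :
    ∀ n : ℕ, 1 ≤ n → ∀ t : ℝ, T ≤ t →
      |tauSeq f (n + 1) t - tauSeq f n t|
      ≤ (t + n) / ∏ k ∈ Finset.range n, f (t + (k + 1 : ℕ)) := by
  have hfpos : ∀ t : ℝ, T ≤ t → 0 < f t := fun t ht => lt_trans one_pos (hT1 t ht)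
  have hnonneg : ∀ n : ℕ, ∀ t : ℝ, T ≤ t → 0 ≤ tauSeq f n t := by
    intro n
    induction n with
    | zero => intro t ht; simp [tauSeq]
    | succ n ih =>
      intro t ht
      have ht1 : T ≤ t + 1 := by linarith
      have hlog : 0 ≤ Real.log (1 + tauSeq f n (t+1) / f (t+1)) := by
        apply Real.log_nonneg
        have h1 := div_nonneg (ih (t+1) ht1) (hfpos (t+1) ht1).le
        linarith
      show 0 ≤ t + Real.log (1 + tauSeq f n (t+1) / f (t+1))
      linarith
  have step : ∀ n : ℕ, ∀ t : ℝ, T ≤ t →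
      |tauSeq f (n+2) t - tauSeq f (n+1) t| ≤
        |tauSeq f (n+1) (t+1) - tauSeq f n (t+1)| / f (t+1) := by
    intro n t ht
    have ht1 : T ≤ t + 1 := by linarith
    have hfp := hfpos (t+1) ht1
    have ha := div_nonneg (hnonneg (n+1) (t+1) ht1) hfp.le
    have hb := div_nonneg (hnonneg n (t+1) ht1) hfp.le
    have key := my_log_abs_sub _ _ ha hb
    have h1 : tauSeq f (n+2) t - tauSeq f (n+1) t
        = Real.log (1 + tauSeq f (n+1) (t+1) / f (t+1))
          - Real.log (1 + tauSeq f n (t+1) / f (t+1)) := by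
      show (t + _) - (t + _) = _
      ring
    rw [h1]
    calc _ ≤ |tauSeq f (n+1) (t+1) / f (t+1) - tauSeq f n (t+1) / f (t+1)| := key
      _ = |tauSeq f (n+1) (t+1) - tauSeq f n (t+1)| / f (t+1) := by
          rw [div_sub_div_same, abs_div, abs_of_pos hfp]
  intro n hn
  induction n, hn using Nat.le_induction with
  | base =>
    intro t ht
    have ht1 : T ≤ t + 1 := by linarith
    have hfp := hfpos (t+1) ht1
    have h := step 0 t ht
    have h1 : tauSeq f 1 (t+1) = t + 1 := by
      show (t+1) + Real.log (1 + tauSeq f 0 (t+1+1) / f (t+1+1)) = t + 1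
      simp [tauSeq]
    have h0 : tauSeq f 0 (t+1) = 0 := rfl
    rw [h1, h0] at h
    simpa [abs_of_nonneg (show (0:ℝ) ≤ t + 1 by linarith)] using h
  | succ n hn ih =>
    intro t ht
    have ht1 : T ≤ t + 1 := by linarith
    have hfp := hfpos (t+1) ht1
    have hprodpos : (0:ℝ) < ∏ k ∈ Finset.range n, f (t + 1 + (k + 1 : ℕ)) := by
      apply Finset.prod_pos
      intro k _
      apply hfpos
      have : (0:ℝ) ≤ (k + 1 : ℕ) := by positivity
      linarith
    have h := step n t ht
    have h2 := ih (t+1) ht1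
    calc |tauSeq f (n+1+1) t - tauSeq f (n+1) t|
        ≤ |tauSeq f (n+1) (t+1) - tauSeq f n (t+1)| / f (t+1) := h
      _ ≤ ((t + 1 + n) / ∏ k ∈ Finset.range n, f (t + 1 + (k + 1 : ℕ))) / f (t+1) := by
          gcongr
      _ = (t + (n+1 : ℕ)) / ∏ k ∈ Finset.range (n+1), f (t + (k + 1 : ℕ)) := by
          rw [div_div]
          congr 1
          · push_cast; ring
          · rw [Finset.prod_range_succ']
            congr 1
            · apply Finset.prod_congr rfl
              intro k _
              congr 1
              push_cast; ring
            · norm_num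


theorem tauSeq_successive_difference_bound (φ : ℂ → ℂ)
    (hlim : ∀ K : Set ℂ, IsCompact K →
      TendstoUniformlyOn (fun m s => phiSeq m s) φ atTop K)
    (hfe : ∀ s : ℂ, Complex.exp (s + φ s) = φ (s + 1))
    (hreal : ∀ t : ℝ, (φ (t : ℂ)).im = 0)
    (hpos : ∀ t : ℝ, 0 < (φ (t : ℂ)).re)
    (hmono : StrictMono (fun t : ℝ => (φ (t : ℂ)).re))
    (htop : Tendsto (fun t : ℝ => (φ (t : ℂ)).re) atTop atTop)
    (T : ℝ) (hT : 0 ≤ T) (hT1 : ∀ t : ℝ, T ≤ t → 1 < (φ (t : ℂ)).re) :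
    ∀ n : ℕ, 1 ≤ n → ∀ t : ℝ, T ≤ t →
      |tauSeq (fun u : ℝ => (φ (u : ℂ)).re) (n + 1) t
        - tauSeq (fun u : ℝ => (φ (u : ℂ)).re) n t|
      ≤ (t + n) / ∏ k ∈ Finset.Icc 1 n, (φ ((t + k : ℝ) : ℂ)).re := by
  intro n hn t ht
  have h := my_main (fun u : ℝ => (φ (u : ℂ)).re) T hT hT1 n hn t ht
  convert h using 2
  rw [← Finset.Ico_add_one_right_eq_Icc, Finset.prod_Ico_eq_prod_range]
  apply Finset.prod_congr (by norm_num)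
  intro k _
  congr 2
  push_cast; ring
end

section
/- The sequence τ_n converges uniformly on every bounded interval [T, B]; the limit function τ : [T, ∞) → [0, ∞) is continuous and satisfies exp(φ(t) + τ(t)) = φ(t+1) + τ(t+1) for all t ≥ T. -/
open Filter Topology

lemma tauSeq_zero_def (f : ℝ → ℝ) (t : ℝ) : tauSeq f 0 t = 0 := rfl

lemma tauSeq_succ_def (f : ℝ → ℝ) (n : ℕ) (t : ℝ) :
    tauSeq f (n + 1) t = t + Real.log (1 + tauSeq f n (t + 1) / f (t + 1)) := rfl

lemma continuous_phiNest (z : ℂ) : ∀ (k n : ℕ), Continuous fun s : ℂ => PhiNest s z n k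
  | 0, n => by
    have h : (fun s : ℂ => PhiNest s z n 0) = fun s : ℂ => Complex.exp (s - (n : ℂ) + z) := rfl
    rw [h]
    exact Complex.continuous_exp.comp ((continuous_id.sub continuous_const).add continuous_const)
  | k + 1, n => by
    have ih := continuous_phiNest z k (n + 1)
    have h : (fun s : ℂ => PhiNest s z n (k + 1)) =
        fun s : ℂ => Complex.exp (s - (n : ℂ) + PhiNest s z (n + 1) k) := rfl
    rw [h]
    exact Complex.continuous_exp.comp ((continuous_id.sub continuous_const).add ih)

lemma continuous_phiSeq (m : ℕ) : Continuous (phiSeq m) :=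
  continuous_phiNest 0 (m - 1) 1

section TauAux

variable {f : ℝ → ℝ} {T : ℝ}

lemma tau_nonneg (hT0 : 0 ≤ T) (hf0 : ∀ t, 0 < f t) :
    ∀ n, ∀ t, T ≤ t → 0 ≤ tauSeq f n t := by
  intro n
  induction n with
  | zero => intro t _; simp [tauSeq_zero_def]
  | succ n ih =>
    intro t ht
    have h1 : 0 ≤ tauSeq f n (t + 1) / f (t + 1) :=
      div_nonneg (ih (t + 1) (by linarith)) (hf0 (t + 1)).le
    have h2 := Real.log_nonneg (by linarith : (1:ℝ) ≤ 1 + tauSeq f n (t + 1) / f (t + 1))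
    rw [tauSeq_succ_def]; linarith

lemma tau_mono_succ (hT0 : 0 ≤ T) (hf0 : ∀ t, 0 < f t) :
    ∀ n, ∀ t, T ≤ t → tauSeq f n t ≤ tauSeq f (n + 1) t := by
  intro n
  induction n with
  | zero =>
    intro t ht
    rw [tauSeq_zero_def, tauSeq_succ_def, tauSeq_zero_def]
    simp only [zero_div, add_zero, Real.log_one]
    linarith
  | succ n ih =>
    intro t ht
    have ht1 : T ≤ t + 1 := by linarith
    have hle := ih (t + 1) ht1
    have h0 : 0 ≤ tauSeq f n (t + 1) / f (t + 1) :=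
      div_nonneg (tau_nonneg hT0 hf0 n (t + 1) ht1) (hf0 (t + 1)).le
    have hdiv : tauSeq f n (t + 1) / f (t + 1) ≤ tauSeq f (n + 1) (t + 1) / f (t + 1) :=
      (div_le_div_iff_of_pos_right (hf0 (t + 1))).mpr hle
    rw [tauSeq_succ_def, tauSeq_succ_def]
    have := Real.log_le_log (by linarith) (by linarith :
      1 + tauSeq f n (t + 1) / f (t + 1) ≤ 1 + tauSeq f (n + 1) (t + 1) / f (t + 1))
    linarith

lemma tau_diff (hT0 : 0 ≤ T) (hf0 : ∀ t, 0 < f t)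
    (hgrow : ∀ t, T ≤ t → Real.exp (t + 1) ≤ f (t + 1)) :
    ∀ n, ∀ t, T ≤ t → tauSeq f (n + 1) t - tauSeq f n t ≤ (t + 2) * (9/10) ^ n := by
  intro n
  induction n with
  | zero =>
    intro t ht
    rw [tauSeq_zero_def, tauSeq_succ_def, tauSeq_zero_def]
    simp only [zero_div, add_zero, Real.log_one, pow_zero, mul_one]
    linarith
  | succ n ih =>
    intro t ht
    have ht0 : 0 ≤ t := le_trans hT0 ht
    have ht1 : T ≤ t + 1 := by linarith
    have hfp := hf0 (t + 1)
    set a := tauSeq f n (t + 1) / f (t + 1) with ha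
    set b := tauSeq f (n + 1) (t + 1) / f (t + 1) with hb
    have ha0 : 0 ≤ a := div_nonneg (tau_nonneg hT0 hf0 n (t + 1) ht1) hfp.le
    have hab : a ≤ b := (div_le_div_iff_of_pos_right hfp).mpr (tau_mono_succ hT0 hf0 n (t + 1) ht1)
    -- log(1+b) - log(1+a) ≤ b - a
    have hlog : Real.log (1 + b) - Real.log (1 + a) ≤ b - a := by
      have h1 : (0:ℝ) < 1 + a := by linarith
      have h2 : (0:ℝ) < 1 + b := by linarith
      have h3 : Real.log ((1 + b) / (1 + a)) ≤ (1 + b) / (1 + a) - 1 :=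
        Real.log_le_sub_one_of_pos (by positivity)
      rw [Real.log_div h2.ne' h1.ne'] at h3
      have h4 : (1 + b) / (1 + a) - 1 = (b - a) / (1 + a) := by
        field_simp
        ring
      rw [h4] at h3
      have h5 : (b - a) / (1 + a) ≤ b - a := div_le_self (by linarith) (by linarith)
      linarith
    -- b - a ≤ (t+3)*(9/10)^n / exp(t+1)
    have hba : b - a ≤ (t + 3) * (9/10) ^ n / Real.exp (t + 1) := by
      have hnum : tauSeq f (n + 1) (t + 1) - tauSeq f n (t + 1) ≤ (t + 3) * (9/10) ^ n := by
        have := ih (t + 1) ht1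
        calc tauSeq f (n + 1) (t + 1) - tauSeq f n (t + 1)
            ≤ ((t + 1) + 2) * (9/10) ^ n := this
          _ = (t + 3) * (9/10) ^ n := by ring
      have hE : Real.exp (t + 1) ≤ f (t + 1) := hgrow t ht
      have hEp : (0:ℝ) < Real.exp (t + 1) := Real.exp_pos _
      have hnum0 : 0 ≤ (t + 3) * (9/10:ℝ) ^ n := by positivity
      calc b - a = (tauSeq f (n + 1) (t + 1) - tauSeq f n (t + 1)) / f (t + 1) := by
            rw [ha, hb]; field_simp
        _ ≤ ((t + 3) * (9/10) ^ n) / f (t + 1) :=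
            (div_le_div_iff_of_pos_right hfp).mpr hnum
        _ ≤ ((t + 3) * (9/10) ^ n) / Real.exp (t + 1) :=
            div_le_div_of_nonneg_left hnum0 hEp hE
    -- (t+3)*(9/10)^n / exp(t+1) ≤ (t+2)*(9/10)^(n+1)
    have hkey : (t + 3) * (9/10:ℝ) ^ n / Real.exp (t + 1) ≤ (t + 2) * (9/10) ^ (n + 1) := by
      rw [div_le_iff₀ (Real.exp_pos _)]
      have hE2 : t + 2 ≤ Real.exp (t + 1) := by
        have := Real.add_one_le_exp (t + 1); linarith
      have hp : (0:ℝ) ≤ (9/10:ℝ) ^ n := by positivity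
      have hq : (t + 3) ≤ (t + 2) * (9/10) * Real.exp (t + 1) := by
        nlinarith [hE2, ht0]
      calc (t + 3) * (9/10:ℝ) ^ n ≤ ((t + 2) * (9/10) * Real.exp (t + 1)) * (9/10) ^ n :=
            mul_le_mul_of_nonneg_right hq hp
        _ = (t + 2) * (9/10) ^ (n + 1) * Real.exp (t + 1) := by ring
    have hL : tauSeq f (n + 1 + 1) t = t + Real.log (1 + b) := by
      rw [tauSeq_succ_def, ← hb]
    have hA : tauSeq f (n + 1) t = t + Real.log (1 + a) := by
      rw [tauSeq_succ_def, ← ha]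
    rw [hL, hA]
    linarith

lemma tau_gap (hT0 : 0 ≤ T) (hf0 : ∀ t, 0 < f t)
    (hgrow : ∀ t, T ≤ t → Real.exp (t + 1) ≤ f (t + 1)) :
    ∀ (n m : ℕ), n ≤ m → ∀ t, T ≤ t →
      tauSeq f m t - tauSeq f n t ≤ 10 * (t + 2) * ((9/10) ^ n - (9/10) ^ m) := by
  intro n m hnm
  induction m, hnm using Nat.le_induction with
  | base => intro t _; simp
  | succ m hnm ih =>
    intro t ht
    have h1 := ih t ht
    have h2 := tau_diff hT0 hf0 hgrow m t ht
    have h3 : ((9:ℝ)/10) ^ (m + 1) = (9/10) ^ m * (9/10) := pow_succ _ _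
    have ht0 : 0 ≤ t := le_trans hT0 ht
    nlinarith [h1, h2, h3]

end TauAux

theorem tauSeq_tendstoUniformly_exists_tau (φ : ℂ → ℂ)
    (hlim : ∀ K : Set ℂ, IsCompact K →
      TendstoUniformlyOn (fun m s => phiSeq m s) φ atTop K)
    (hfe : ∀ s : ℂ, Complex.exp (s + φ s) = φ (s + 1))
    (hreal : ∀ t : ℝ, (φ (t : ℂ)).im = 0)
    (hpos : ∀ t : ℝ, 0 < (φ (t : ℂ)).re)
    (hmono : StrictMono (fun t : ℝ => (φ (t : ℂ)).re))
    (htop : Tendsto (fun t : ℝ => (φ (t : ℂ)).re) atTop atTop)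
    (T : ℝ) (hT : 0 ≤ T) (hT1 : ∀ t : ℝ, T ≤ t → 1 < (φ (t : ℂ)).re) :
    ∃ τ : ℝ → ℝ,
      (∀ B : ℝ, TendstoUniformlyOn
        (fun n t => tauSeq (fun u : ℝ => (φ (u : ℂ)).re) n t) τ atTop
        (Set.Icc T B)) ∧
      ContinuousOn τ (Set.Ici T) ∧
      (∀ t : ℝ, T ≤ t → 0 ≤ τ t) ∧
      (∀ t : ℝ, T ≤ t →
        Real.exp ((φ (t : ℂ)).re + τ t) = (φ ((t + 1 : ℝ) : ℂ)).re + τ (t + 1)) := by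
  set f : ℝ → ℝ := fun u : ℝ => (φ (u : ℂ)).re with hfdef
  have hf0 : ∀ t, 0 < f t := hpos
  -- the real functional equation
  have hrec : ∀ t : ℝ, Real.exp (t + f t) = f (t + 1) := by
    intro t
    have h := hfe (t : ℂ)
    have him : ((t : ℂ) + φ (t : ℂ)).im = 0 := by
      simp [hreal t]
    have hre : ((t : ℂ) + φ (t : ℂ)).re = t + f t := by simp [hfdef]
    have hcast : ((t : ℂ) + 1) = ((t + 1 : ℝ) : ℂ) := by push_cast; ring
    calc Real.exp (t + f t) = (Complex.exp ((t : ℂ) + φ (t : ℂ))).re := by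
          rw [Complex.exp_re, him, hre, Real.cos_zero, mul_one]
      _ = (φ ((t : ℂ) + 1)).re := by rw [h]
      _ = f (t + 1) := by rw [hcast]
  have hgrow : ∀ t, T ≤ t → Real.exp (t + 1) ≤ f (t + 1) := by
    intro t ht
    rw [← hrec t]
    exact Real.exp_le_exp.mpr (by linarith [hT1 t ht])
  -- the limit function
  set τ : ℝ → ℝ := fun t => ⨆ n, tauSeq f n t with hτdef
  have hbdd : ∀ t, T ≤ t → BddAbove (Set.range fun n => tauSeq f n t) := by
    intro t ht
    refine ⟨10 * (t + 2), ?_⟩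
    rintro x ⟨m, rfl⟩
    have := tau_gap hT hf0 hgrow 0 m (Nat.zero_le m) t ht
    have hp : (0:ℝ) ≤ (9/10:ℝ) ^ m := by positivity
    have ht0 : 0 ≤ t := le_trans hT ht
    simp only [tauSeq_zero_def, pow_zero, sub_zero] at this
    nlinarith
  have hmonon : ∀ t, T ≤ t → Monotone fun n => tauSeq f n t := fun t ht =>
    monotone_nat_of_le_succ fun n => tau_mono_succ hT hf0 n t ht
  have htend : ∀ t, T ≤ t → Tendsto (fun n => tauSeq f n t) atTop (𝓝 (τ t)) := fun t ht =>
    tendsto_atTop_ciSup (hmonon t ht) (hbdd t ht)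
  have hle : ∀ n t, T ≤ t → tauSeq f n t ≤ τ t := fun n t ht => le_ciSup (hbdd t ht) n
  have hτnn : ∀ t, T ≤ t → 0 ≤ τ t := by
    intro t ht
    have := hle 0 t ht
    rw [tauSeq_zero_def] at this
    exact this
  have hub : ∀ n t, T ≤ t → τ t - tauSeq f n t ≤ 10 * (t + 2) * (9/10) ^ n := by
    intro n t ht
    have hnn : (0:ℝ) ≤ 10 * (t + 2) * (9/10) ^ n := by
      have ht0 : 0 ≤ t := le_trans hT ht
      positivity
    have : τ t ≤ tauSeq f n t + 10 * (t + 2) * (9/10) ^ n := by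
      refine ciSup_le fun m => ?_
      rcases le_or_gt n m with h | h
      · have := tau_gap hT hf0 hgrow n m h t ht
        have hp : (0:ℝ) ≤ (9/10:ℝ) ^ m := by positivity
        have ht0 : 0 ≤ t := le_trans hT ht
        nlinarith
      · have := hmonon t ht h.le
        linarith
    linarith
  -- uniform convergence
  have hUnif : ∀ B : ℝ, TendstoUniformlyOn (fun n t => tauSeq f n t) τ atTop (Set.Icc T B) := by
    intro B
    rw [Metric.tendstoUniformlyOn_iff]
    intro ε hε
    have h0 : Tendsto (fun n : ℕ => 10 * (B + 2) * (9/10:ℝ) ^ n) atTop (𝓝 0) := by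
      have := (tendsto_pow_atTop_nhds_zero_of_lt_one (by norm_num : (0:ℝ) ≤ 9/10)
        (by norm_num : (9/10:ℝ) < 1)).const_mul (10 * (B + 2))
      simpa using this
    filter_upwards [h0.eventually_lt_const hε] with n hn t ht
    have h1 := hub n t ht.1
    have h2 := hle n t ht.1
    have hp : (0:ℝ) ≤ (9/10:ℝ) ^ n := by positivity
    rw [Real.dist_eq, abs_of_nonneg (by linarith)]
    have hmon : 10 * (t + 2) * (9/10:ℝ) ^ n ≤ 10 * (B + 2) * (9/10:ℝ) ^ n := by
      nlinarith [ht.2]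
    linarith
  -- continuity of f
  have hφc : Continuous φ := by
    rw [continuous_iff_continuousAt]
    intro s
    have hK : IsCompact (Metric.closedBall s 1) := isCompact_closedBall s 1
    have hc : ContinuousOn φ (Metric.closedBall s 1) :=
      (hlim _ hK).continuousOn
        (Eventually.frequently (Eventually.of_forall fun m => (continuous_phiSeq m).continuousOn))
    exact hc.continuousAt (Metric.closedBall_mem_nhds s one_pos)
  have hfc : Continuous f := Complex.continuous_re.comp (hφc.comp Complex.continuous_ofReal)
  -- continuity of each tauSeq on [T, ∞)
  have hcn : ∀ n, ContinuousOn (tauSeq f n) (Set.Ici T) := by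
    intro n
    induction n with
    | zero =>
      have h : tauSeq f 0 = fun _ : ℝ => (0:ℝ) := rfl
      rw [h]; exact continuousOn_const
    | succ n ih =>
      have hadd : Continuous fun t : ℝ => t + 1 := continuous_id.add continuous_const
      have hmap : Set.MapsTo (fun t : ℝ => t + 1) (Set.Ici T) (Set.Ici T) := by
        intro t ht
        simp only [Set.mem_Ici] at *
        linarith
      have h1 : ContinuousOn (fun t => tauSeq f n (t + 1)) (Set.Ici T) :=
        ih.comp hadd.continuousOn hmap
      have h2 : ContinuousOn (fun t => f (t + 1)) (Set.Ici T) :=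
        (hfc.comp hadd).continuousOn
      have h3 : ContinuousOn (fun t => 1 + tauSeq f n (t + 1) / f (t + 1)) (Set.Ici T) :=
        continuousOn_const.add (h1.div h2 fun t _ => (hf0 (t + 1)).ne')
      have h4 : ContinuousOn (fun t => Real.log (1 + tauSeq f n (t + 1) / f (t + 1)))
          (Set.Ici T) := by
        refine h3.log fun t ht => ?_
        have ht1 : T ≤ t + 1 := by
          simp only [Set.mem_Ici] at ht; linarith
        have hnn : 0 ≤ tauSeq f n (t + 1) / f (t + 1) :=
          div_nonneg (tau_nonneg hT hf0 n (t + 1) ht1) (hf0 (t + 1)).le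
        intro hc
        linarith [hc ▸ hnn]
      have h5 : tauSeq f (n + 1) =
          fun t => t + Real.log (1 + tauSeq f n (t + 1) / f (t + 1)) := rfl
      rw [h5]
      exact continuousOn_id.add h4
  -- continuity of τ on [T, ∞)
  have hτc : ContinuousOn τ (Set.Ici T) := by
    intro t ht
    have ht' : T ≤ t := ht
    have hB : ContinuousOn τ (Set.Icc T (t + 1)) :=
      (hUnif (t + 1)).continuousOn
        (Eventually.frequently (Eventually.of_forall fun n => (hcn n).mono Set.Icc_subset_Ici_self))
    have hmem : Set.Icc T (t + 1) ∈ nhdsWithin t (Set.Ici T) := by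
      rw [mem_nhdsWithin]
      refine ⟨Set.Iio (t + 1), isOpen_Iio, by simp only [Set.mem_Iio]; linarith, ?_⟩
      rintro x ⟨hx1, hx2⟩
      exact ⟨hx2, le_of_lt hx1⟩
    exact ContinuousWithinAt.mono_of_mem_nhdsWithin (hB t ⟨ht', by linarith⟩) hmem
  -- the limit functional equation
  have hτrec : ∀ t, T ≤ t → τ t = t + Real.log (1 + τ (t + 1) / f (t + 1)) := by
    intro t ht
    have ht1 : T ≤ t + 1 := by linarith
    have h1 : Tendsto (fun n => tauSeq f (n + 1) t) atTop (𝓝 (τ t)) :=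
      (htend t ht).comp (tendsto_add_atTop_nat 1)
    have hpos1 : (0:ℝ) < 1 + τ (t + 1) / f (t + 1) := by
      have h0 : 0 ≤ τ (t + 1) := hτnn (t + 1) ht1
      have := div_nonneg h0 (hf0 (t + 1)).le
      linarith
    have h2 : Tendsto (fun n => t + Real.log (1 + tauSeq f n (t + 1) / f (t + 1))) atTop
        (𝓝 (t + Real.log (1 + τ (t + 1) / f (t + 1)))) :=
      tendsto_const_nhds.add
        ((((htend (t + 1) ht1).div_const _).const_add 1).log hpos1.ne')
    have h1' : Tendsto (fun n => t + Real.log (1 + tauSeq f n (t + 1) / f (t + 1))) atTop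
        (𝓝 (τ t)) := by
      have heq : (fun n => tauSeq f (n + 1) t) =
          fun n => t + Real.log (1 + tauSeq f n (t + 1) / f (t + 1)) := by
        funext n; exact tauSeq_succ_def f n t
      rwa [heq] at h1
    exact tendsto_nhds_unique h1' h2
  -- the functional equation for τ
  have hfinal : ∀ t, T ≤ t → Real.exp (f t + τ t) = f (t + 1) + τ (t + 1) := by
    intro t ht
    have ht1 : T ≤ t + 1 := by linarith
    have hpos1 : (0:ℝ) < 1 + τ (t + 1) / f (t + 1) := by
      have h0 : 0 ≤ τ (t + 1) := hτnn (t + 1) ht1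
      have := div_nonneg h0 (hf0 (t + 1)).le
      linarith
    have harr : f t + τ t = (t + f t) + Real.log (1 + τ (t + 1) / f (t + 1)) := by
      rw [hτrec t ht]; ring
    rw [harr, Real.exp_add, hrec t, Real.exp_log hpos1]
    have hne : f (t + 1) ≠ 0 := (hf0 (t + 1)).ne'
    field_simp
  exact ⟨τ, hUnif, hτc, hτnn, hfinal⟩
end

section
/- There exists a function F : ℝ → ℝ such that F restricted to the interval (−2, ∞) is continuously differentiable with F'(t) > 0 for all t > −2, F maps (−2, ∞) bijectively onto ℝ, F(0) = 1, and exp(F(t)) = F(t+1) for all t > −2. -/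
open Set Real

noncomputable def EE : ℕ → ℝ → ℝ := fun n => Real.exp^[n]

noncomputable def DEx : ℕ → ℝ → ℝ
  | 0, _ => 1
  | n+1, x => DEx n (Real.exp x) * Real.exp x

lemma EE_zero (x : ℝ) : EE 0 x = x := rfl
lemma EE_succ (n : ℕ) (x : ℝ) : EE (n+1) x = EE n (Real.exp x) := by
  simp [EE, Function.iterate_succ_apply]

lemma DEx_pos (n : ℕ) (x : ℝ) : 0 < DEx n x := by
  induction n generalizing x with
  | zero => norm_num [DEx]
  | succ n ih => exact mul_pos (ih _) (Real.exp_pos x)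

lemma DEx_cont (n : ℕ) : Continuous (DEx n) := by
  induction n with
  | zero => simpa [DEx] using continuous_const
  | succ n ih => exact (ih.comp Real.continuous_exp).mul Real.continuous_exp

lemma hasDerivAt_EE (n : ℕ) (x : ℝ) : HasDerivAt (EE n) (DEx n x) x := by
  induction n generalizing x with
  | zero => simpa [EE, DEx] using hasDerivAt_id x
  | succ n ih =>
    have h : HasDerivAt (fun y => EE n (Real.exp y)) (DEx n (Real.exp x) * Real.exp x) x :=
      (ih (Real.exp x)).comp x (Real.hasDerivAt_exp x)
    have : (fun y => EE n (Real.exp y)) = EE (n+1) := by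
      funext y; rw [EE_succ]
    rwa [this] at h

noncomputable def Fp (t : ℝ) : ℝ :=
  if t ≤ -1 then Real.log (t+2) else EE (⌈t⌉).toNat (t - ⌈t⌉ + 1)

noncomputable def Dp (t : ℝ) : ℝ :=
  if t ≤ -1 then (t+2)⁻¹ else DEx (⌈t⌉).toNat (t - ⌈t⌉ + 1)

lemma Fp_low {t : ℝ} (h : t ≤ -1) : Fp t = Real.log (t+2) := if_pos h
lemma Dp_low {t : ℝ} (h : t ≤ -1) : Dp t = (t+2)⁻¹ := if_pos h

lemma ceil_mem {n : ℕ} {t : ℝ} (h1 : (n:ℝ) - 1 < t) (h2 : t ≤ n) : ⌈t⌉ = (n:ℤ) := by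
  rw [Int.ceil_eq_iff]
  constructor <;> push_cast <;> linarith

lemma Fp_eq (n : ℕ) {t : ℝ} (h : t ∈ Set.Icc ((n:ℝ)-1) (n:ℝ)) : Fp t = EE n (t - n + 1) := by
  rcases eq_or_lt_of_le h.1 with he | hlt
  · -- t = n - 1
    cases n with
    | zero =>
      have ht : t = -1 := by push_cast at he; linarith
      subst ht
      rw [Fp_low le_rfl]
      norm_num [EE_zero]
    | succ m =>
      have ht : t = (m:ℝ) := by push_cast at he; linarith
      subst ht
      have hc : ⌈(m:ℝ)⌉ = (m:ℤ) := by simp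
      have hnle : ¬ ((m:ℝ) ≤ -1) := by
        have : (0:ℝ) ≤ m := Nat.cast_nonneg m
        linarith
      rw [Fp, if_neg hnle, hc]
      have h1 : ((m:ℤ).toNat) = m := rfl
      rw [h1]
      have h2 : (m:ℝ) - (m:ℤ) + 1 = 1 := by push_cast; ring
      have h3 : (m:ℝ) - ((m+1 : ℕ):ℝ) + 1 = 0 := by push_cast; ring
      rw [h2, h3, EE_succ]
      norm_num
  · have hc : ⌈t⌉ = (n:ℤ) := ceil_mem hlt h.2
    have hnle : ¬ (t ≤ -1) := by
      have : (0:ℝ) ≤ n := Nat.cast_nonneg n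
      push_neg; linarith
    rw [Fp, if_neg hnle, hc]
    norm_num

lemma Dp_eq (n : ℕ) {t : ℝ} (h : t ∈ Set.Icc ((n:ℝ)-1) (n:ℝ)) : Dp t = DEx n (t - n + 1) := by
  rcases eq_or_lt_of_le h.1 with he | hlt
  · cases n with
    | zero =>
      have ht : t = -1 := by push_cast at he; linarith
      subst ht
      rw [Dp_low le_rfl]
      norm_num [DEx]
    | succ m =>
      have ht : t = (m:ℝ) := by push_cast at he; linarith
      subst ht
      have hc : ⌈(m:ℝ)⌉ = (m:ℤ) := by simp
      have hnle : ¬ ((m:ℝ) ≤ -1) := by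
        have : (0:ℝ) ≤ m := Nat.cast_nonneg m
        linarith
      rw [Dp, if_neg hnle, hc]
      have h1 : ((m:ℤ).toNat) = m := rfl
      rw [h1]
      have h2 : (m:ℝ) - (m:ℤ) + 1 = 1 := by push_cast; ring
      have h3 : (m:ℝ) - ((m+1 : ℕ):ℝ) + 1 = 0 := by push_cast; ring
      rw [h2, h3]
      show DEx m 1 = DEx m (Real.exp 0) * Real.exp 0
      norm_num
  · have hc : ⌈t⌉ = (n:ℤ) := ceil_mem hlt h.2
    have hnle : ¬ (t ≤ -1) := by
      have : (0:ℝ) ≤ n := Nat.cast_nonneg n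
      push_neg; linarith
    rw [Dp, if_neg hnle, hc]
    norm_num

lemma hasDerivAt_g (n : ℕ) (t : ℝ) :
    HasDerivAt (fun x : ℝ => EE n (x - n + 1)) (DEx n (t - n + 1)) t := by
  have inner : HasDerivAt (fun x : ℝ => x - n + 1) 1 t := by
    simpa using ((hasDerivAt_id t).sub_const (n:ℝ)).add_const 1
  have := (hasDerivAt_EE n (t - n + 1)).comp t inner
  rw [mul_one] at this; exact this

lemma hasDerivAt_junction (n : ℕ) : HasDerivAt Fp (Dp n) (n:ℝ) := by
  have hmem : (n:ℝ) ∈ Set.Icc ((n:ℝ)-1) (n:ℝ) := by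
    constructor <;> norm_num
  have hd : Dp (n:ℝ) = DEx n 1 := by
    rw [Dp_eq n hmem]; norm_num
  -- left part
  have hleft : HasDerivWithinAt Fp (Dp n) (Set.Iic (n:ℝ)) n := by
    have h1 : HasDerivWithinAt (fun x : ℝ => EE n (x - n + 1)) (Dp n)
        (Set.Icc ((n:ℝ)-1) n) n := by
      have := (hasDerivAt_g n n).hasDerivWithinAt (s := Set.Icc ((n:ℝ)-1) n)
      rw [hd]; simpa using this
    have h2 := h1.congr (fun x hx => Fp_eq n hx) (Fp_eq n hmem)
    exact h2.mono_of_mem_nhdsWithin (Icc_mem_nhdsLE (by linarith))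
  -- right part
  have hmem' : (n:ℝ) ∈ Set.Icc (((n+1:ℕ):ℝ)-1) ((n+1:ℕ):ℝ) := by
    constructor <;> push_cast <;> linarith
  have hright : HasDerivWithinAt Fp (Dp n) (Set.Ici (n:ℝ)) n := by
    have h1 : HasDerivWithinAt (fun x : ℝ => EE (n+1) (x - (n+1:ℕ) + 1)) (Dp n)
        (Set.Icc ((n:ℝ)) ((n:ℝ)+1)) n := by
      have h0 := (hasDerivAt_g (n+1) n).hasDerivWithinAt (s := Set.Icc ((n:ℝ)) ((n:ℝ)+1))
      have he : DEx (n+1) ((n:ℝ) - ((n+1:ℕ):ℝ) + 1) = Dp n := by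
        have : (n:ℝ) - ((n+1:ℕ):ℝ) + 1 = 0 := by push_cast; ring
        rw [this, hd]
        show DEx n (Real.exp 0) * Real.exp 0 = DEx n 1
        norm_num
      rwa [he] at h0
    have hicc : Set.Icc ((n:ℝ)) ((n:ℝ)+1) = Set.Icc (((n+1:ℕ):ℝ)-1) ((n+1:ℕ):ℝ) := by
      push_cast; norm_num
    rw [hicc] at h1
    have h2 := h1.congr (fun x hx => Fp_eq (n+1) hx) (Fp_eq (n+1) hmem')
    rw [← hicc] at h2
    exact h2.mono_of_mem_nhdsWithin (Icc_mem_nhdsGE (by linarith))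
  have := hleft.union hright
  rwa [Set.Iic_union_Ici, hasDerivWithinAt_univ] at this

lemma hasDerivAt_neg_one : HasDerivAt Fp (Dp (-1)) (-1:ℝ) := by
  have hd : Dp (-1:ℝ) = 1 := by rw [Dp_low le_rfl]; norm_num
  have hlog : HasDerivAt (fun x : ℝ => Real.log (x+2)) 1 (-1) := by
    have inner : HasDerivAt (fun x : ℝ => x + 2) 1 (-1:ℝ) := by
      simpa using (hasDerivAt_id (-1:ℝ)).add_const 2
    have h2 : HasDerivAt (fun x : ℝ => Real.log (x+2)) (((-1:ℝ)+2)⁻¹ * 1) (-1) :=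
      by have := (Real.hasDerivAt_log (by norm_num : (-1:ℝ)+2 ≠ 0)).comp (-1:ℝ) inner; exact this
    norm_num at h2; exact h2
  have hleft : HasDerivWithinAt Fp (Dp (-1)) (Set.Iic (-1:ℝ)) (-1) := by
    rw [hd]
    exact (hlog.hasDerivWithinAt (s := Set.Iic (-1:ℝ))).congr
      (fun x hx => Fp_low hx) (Fp_low le_rfl)
  have hmem : (-1:ℝ) ∈ Set.Icc (((0:ℕ):ℝ)-1) ((0:ℕ):ℝ) := by norm_num
  have hright : HasDerivWithinAt Fp (Dp (-1)) (Set.Ici (-1:ℝ)) (-1) := by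
    have h1 : HasDerivWithinAt (fun x : ℝ => EE 0 (x - (0:ℕ) + 1)) (Dp (-1))
        (Set.Icc (((0:ℕ):ℝ)-1) ((0:ℕ):ℝ)) (-1) := by
      have h0 := (hasDerivAt_g 0 (-1)).hasDerivWithinAt
        (s := Set.Icc (((0:ℕ):ℝ)-1) ((0:ℕ):ℝ))
      have : DEx 0 ((-1:ℝ) - (0:ℕ) + 1) = Dp (-1) := by rw [hd]; rfl
      rwa [this] at h0
    have h2 := h1.congr (fun x hx => Fp_eq 0 hx) (Fp_eq 0 hmem)
    have hicc0 : Set.Icc (((0:ℕ):ℝ)-1) ((0:ℕ):ℝ) = Set.Icc (-1:ℝ) 0 := by norm_num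
    rw [hicc0] at h2
    exact h2.mono_of_mem_nhdsWithin (Icc_mem_nhdsGE (by norm_num))
  have := hleft.union hright
  rwa [Set.Iic_union_Ici, hasDerivWithinAt_univ] at this

lemma ceil_cases {t : ℝ} (ht : -1 < t) :
    ∃ n : ℕ, (n:ℝ) - 1 < t ∧ t ≤ n ∧ (⌈t⌉ = (n:ℤ)) := by
  have h0 : (0:ℤ) ≤ ⌈t⌉ := by
    have : (-1:ℤ) < ⌈t⌉ := Int.lt_ceil.mpr (by exact_mod_cast ht)
    omega
  refine ⟨⌈t⌉.toNat, ?_, ?_, ?_⟩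
  · have h2 : ((⌈t⌉:ℝ)) < t + 1 := Int.ceil_lt_add_one t
    rw [show ((⌈t⌉.toNat : ℕ):ℝ) = ((⌈t⌉:ℤ):ℝ) by exact_mod_cast Int.toNat_of_nonneg h0]
    linarith
  · have h2 : t ≤ ((⌈t⌉:ℤ):ℝ) := Int.le_ceil t
    rwa [show ((⌈t⌉.toNat : ℕ):ℝ) = ((⌈t⌉:ℤ):ℝ) by exact_mod_cast Int.toNat_of_nonneg h0]
  · exact (Int.toNat_of_nonneg h0).symm

lemma hasD {t : ℝ} (ht : -2 < t) : HasDerivAt Fp (Dp t) t := by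
  rcases lt_trichotomy t (-1) with h1 | h1 | h1
  · -- t < -1 : locally log
    have hlog : HasDerivAt (fun x : ℝ => Real.log (x+2)) ((t+2)⁻¹) t := by
      have inner : HasDerivAt (fun x : ℝ => x + 2) 1 t := by
        simpa using (hasDerivAt_id t).add_const 2
      have h2 : HasDerivAt (fun x : ℝ => Real.log (x+2)) ((t+2)⁻¹ * 1) t :=
        by have := (Real.hasDerivAt_log (by linarith : t+2 ≠ 0)).comp t inner; exact this
      simpa using h2
    have hev : Fp =ᶠ[nhds t] (fun x : ℝ => Real.log (x+2)) :=
      Filter.eventuallyEq_of_mem (Iio_mem_nhds h1) (fun x hx => Fp_low (le_of_lt hx))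
    rw [Dp_low h1.le]
    exact hlog.congr_of_eventuallyEq hev
  · subst h1; exact hasDerivAt_neg_one
  · -- t > -1
    obtain ⟨n, hn1, hn2, _⟩ := ceil_cases h1
    rcases eq_or_lt_of_le hn2 with he | hlt
    · rw [he]
      exact hasDerivAt_junction n
    · -- interior of (n-1, n)
      have hev : Fp =ᶠ[nhds t] (fun x : ℝ => EE n (x - n + 1)) :=
        Filter.eventuallyEq_of_mem (Ioo_mem_nhds hn1 hlt)
          (fun x hx => Fp_eq n (Set.Ioo_subset_Icc_self hx))
      rw [Dp_eq n ⟨hn1.le, hn2⟩]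
      exact (hasDerivAt_g n t).congr_of_eventuallyEq hev

lemma Dp_pos {t : ℝ} (ht : -2 < t) : 0 < Dp t := by
  by_cases h : t ≤ -1
  · rw [Dp_low h]
    have : 0 < t + 2 := by linarith
    positivity
  · rw [Dp, if_neg h]
    exact DEx_pos _ _

lemma cont_g (n : ℕ) : Continuous (fun x : ℝ => DEx n (x - n + 1)) :=
  (DEx_cont n).comp (by continuity)

lemma Dp_contAt {t : ℝ} (ht : -2 < t) : ContinuousAt Dp t := by
  have contlog : Continuous (fun x : ℝ => (x+2)⁻¹) → True := fun _ => trivial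
  rcases lt_trichotomy t (-1) with h1 | h1 | h1
  · have hc : ContinuousAt (fun x : ℝ => (x+2)⁻¹) t := by
      apply ContinuousAt.inv₀ (by fun_prop)
      intro h; linarith [h]
    refine hc.congr_of_eventuallyEq ?_
    exact Filter.eventuallyEq_of_mem (Iio_mem_nhds h1) (fun x hx => Dp_low (le_of_lt hx))
  · -- t = -1
    subst h1
    have hleft : ContinuousWithinAt Dp (Set.Iic (-1:ℝ)) (-1) := by
      have hc : ContinuousWithinAt (fun x : ℝ => (x+2)⁻¹) (Set.Iic (-1:ℝ)) (-1) := by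
        apply ContinuousWithinAt.inv₀ ((continuous_id.add continuous_const).continuousWithinAt)
        intro h; norm_num at h
      exact hc.congr (fun y hy => Dp_low hy) (Dp_low le_rfl)
    have hmem : (-1:ℝ) ∈ Set.Icc (((0:ℕ):ℝ)-1) ((0:ℕ):ℝ) := by norm_num
    have hright : ContinuousWithinAt Dp (Set.Ici (-1:ℝ)) (-1) := by
      have hc : ContinuousWithinAt (fun x : ℝ => DEx 0 (x - (0:ℕ) + 1))
          (Set.Icc (((0:ℕ):ℝ)-1) ((0:ℕ):ℝ)) (-1) := (cont_g 0).continuousWithinAt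
      have h2 := hc.congr (fun y hy => Dp_eq 0 hy) (Dp_eq 0 hmem)
      have hicc0 : Set.Icc (((0:ℕ):ℝ)-1) ((0:ℕ):ℝ) = Set.Icc (-1:ℝ) 0 := by norm_num
      rw [hicc0] at h2
      exact h2.mono_of_mem_nhdsWithin (Icc_mem_nhdsGE (by norm_num))
    have := hleft.union hright
    rwa [Set.Iic_union_Ici, continuousWithinAt_univ] at this
  · obtain ⟨n, hn1, hn2, _⟩ := ceil_cases h1
    rcases eq_or_lt_of_le hn2 with he | hlt
    · -- t = n : junction
      subst he
      have hmem : ((n:ℕ):ℝ) ∈ Set.Icc ((n:ℝ)-1) (n:ℝ) := by constructor <;> norm_num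
      have hleft : ContinuousWithinAt Dp (Set.Iic ((n:ℕ):ℝ)) (n:ℝ) := by
        have hc : ContinuousWithinAt (fun x : ℝ => DEx n (x - n + 1))
            (Set.Icc ((n:ℝ)-1) (n:ℝ)) (n:ℝ) := (cont_g n).continuousWithinAt
        have h2 := hc.congr (fun y hy => Dp_eq n hy) (Dp_eq n hmem)
        exact h2.mono_of_mem_nhdsWithin (Icc_mem_nhdsLE (by linarith))
      have hmem' : ((n:ℕ):ℝ) ∈ Set.Icc (((n+1:ℕ):ℝ)-1) ((n+1:ℕ):ℝ) := by
        constructor <;> push_cast <;> linarith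
      have hright : ContinuousWithinAt Dp (Set.Ici ((n:ℕ):ℝ)) (n:ℝ) := by
        have hc : ContinuousWithinAt (fun x : ℝ => DEx (n+1) (x - (n+1:ℕ) + 1))
            (Set.Icc (((n+1:ℕ):ℝ)-1) ((n+1:ℕ):ℝ)) (n:ℝ) := (cont_g (n+1)).continuousWithinAt
        have h2 := hc.congr (fun y hy => Dp_eq (n+1) hy) (Dp_eq (n+1) hmem')
        have hicc : Set.Icc (((n+1:ℕ):ℝ)-1) ((n+1:ℕ):ℝ) = Set.Icc ((n:ℝ)) ((n:ℝ)+1) := by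
          push_cast; norm_num
        rw [hicc] at h2
        exact h2.mono_of_mem_nhdsWithin (Icc_mem_nhdsGE (by linarith))
      have := hleft.union hright
      rwa [Set.Iic_union_Ici, continuousWithinAt_univ] at this
    · refine ((cont_g n).continuousAt).congr_of_eventuallyEq ?_
      exact Filter.eventuallyEq_of_mem (Ioo_mem_nhds hn1 hlt)
        (fun x hx => Dp_eq n (Set.Ioo_subset_Icc_self hx))

lemma le_EE (n : ℕ) (x : ℝ) : x + n ≤ EE n x := by
  induction n generalizing x with
  | zero => simp [EE_zero]
  | succ n ih =>
    rw [EE_succ]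
    have h1 : x + 1 ≤ Real.exp x := Real.add_one_le_exp x
    have h2 := ih (Real.exp x)
    push_cast
    linarith

lemma Fp_ge {t : ℝ} (ht : -1 < t) : t + 1 ≤ Fp t := by
  obtain ⟨n, hn1, hn2, _⟩ := ceil_cases ht
  rw [Fp_eq n ⟨hn1.le, hn2⟩]
  have := le_EE n (t - n + 1)
  linarith

lemma Fp_zero : Fp 0 = 1 := by
  have h : (0:ℝ) ∈ Set.Icc (((0:ℕ):ℝ)-1) ((0:ℕ):ℝ) := by norm_num
  rw [Fp_eq 0 h]
  norm_num [EE_zero]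

lemma Fp_feq {t : ℝ} (ht : -2 < t) : Real.exp (Fp t) = Fp (t + 1) := by
  by_cases h : t ≤ -1
  · rw [Fp_low h, Real.exp_log (by linarith : (0:ℝ) < t + 2)]
    have hmem : t + 1 ∈ Set.Icc (((0:ℕ):ℝ)-1) ((0:ℕ):ℝ) := by
      constructor <;> push_cast <;> linarith
    rw [Fp_eq 0 hmem, EE_zero]
    ring
  · push_neg at h
    obtain ⟨n, hn1, hn2, _⟩ := ceil_cases h
    rw [Fp_eq n ⟨hn1.le, hn2⟩]
    have hmem : t + 1 ∈ Set.Icc (((n+1:ℕ):ℝ)-1) ((n+1:ℕ):ℝ) := by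
      constructor <;> push_cast <;> linarith
    rw [Fp_eq (n+1) hmem]
    have harg : t + 1 - ((n+1:ℕ):ℝ) + 1 = t - n + 1 := by push_cast; ring
    rw [harg]
    exact (Function.iterate_succ_apply' Real.exp n (t - (n:ℝ) + 1)).symm

lemma Fp_contOn : ContinuousOn Fp (Set.Ioi (-2:ℝ)) :=
  fun _ ht => (hasD ht).continuousAt.continuousWithinAt

lemma Fp_mono : StrictMonoOn Fp (Set.Ioi (-2:ℝ)) := by
  apply strictMonoOn_of_deriv_pos (convex_Ioi _) Fp_contOn
  intro x hx
  rw [interior_Ioi] at hx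
  rw [(hasD hx).deriv]
  exact Dp_pos hx

/-- There exists a continuously differentiable tetration function (base `e`):
`F : (-2, ∞) → ℝ` bijective, with positive derivative, `F 0 = 1`, and
`exp (F t) = F (t+1)` on `(-2, ∞)`. -/
theorem exists_C1_tetration :
    ∃ F : ℝ → ℝ,
      ContDiffOn ℝ 1 F (Set.Ioi (-2 : ℝ)) ∧
      (∀ t : ℝ, -2 < t → 0 < deriv F t) ∧
      Set.BijOn F (Set.Ioi (-2 : ℝ)) Set.univ ∧
      F 0 = 1 ∧
      (∀ t : ℝ, -2 < t → Real.exp (F t) = F (t + 1)) := by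
  refine ⟨Fp, ?_, ?_, ?_, Fp_zero, fun t ht => Fp_feq ht⟩
  · -- ContDiffOn
    rw [show (1 : WithTop ℕ∞) = 0 + 1 by norm_num]
    rw [contDiffOn_succ_iff_deriv_of_isOpen isOpen_Ioi]
    refine ⟨fun x hx => (hasD hx).differentiableAt.differentiableWithinAt, ?_, ?_⟩
    · intro h; simp at h
    · rw [contDiffOn_zero]
      apply ContinuousOn.congr (fun x hx => (Dp_contAt hx).continuousWithinAt)
      intro x hx
      exact (hasD hx).deriv
  · intro t ht
    rw [(hasD ht).deriv]
    exact Dp_pos ht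
  · refine ⟨fun x _ => Set.mem_univ _, Fp_mono.injOn, ?_⟩
    intro y _
    set a : ℝ := -2 + min (1/2) (Real.exp y) with ha
    set b : ℝ := max 0 y with hb
    have hmin : 0 < min (1/2) (Real.exp y) := lt_min (by norm_num) (Real.exp_pos y)
    have ha2 : -2 < a := by rw [ha]; linarith
    have ha1 : a ≤ -1 := by
      have : min (1/2) (Real.exp y) ≤ 1/2 := min_le_left _ _
      rw [ha]; linarith
    have hab : a ≤ b := le_trans (by linarith [le_max_left (0:ℝ) y] : a ≤ 0) (le_max_left 0 y)
    have hFa : Fp a ≤ y := by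
      rw [Fp_low ha1]
      have : a + 2 = min (1/2) (Real.exp y) := by rw [ha]; ring
      rw [this]
      calc Real.log (min (1/2) (Real.exp y)) ≤ Real.log (Real.exp y) :=
            Real.log_le_log hmin (min_le_right _ _)
        _ = y := Real.log_exp y
    have hFb : y ≤ Fp b := by
      have hb1 : (-1:ℝ) < b := lt_of_lt_of_le (by norm_num) (le_max_left 0 y)
      have := Fp_ge hb1
      have : y ≤ b + 1 := by linarith [le_max_right (0:ℝ) y]
      linarith [Fp_ge hb1]
    have hsub : Set.Icc a b ⊆ Set.Ioi (-2:ℝ) := fun x hx => lt_of_lt_of_le ha2 hx.1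
    have := intermediate_value_Icc hab (Fp_contOn.mono hsub)
    have hy : y ∈ Set.Icc (Fp a) (Fp b) := ⟨hFa, hFb⟩
    obtain ⟨x, hx, hxy⟩ := this hy
    exact ⟨x, hsub hx, hxy⟩
end

section
/- There exists a continuously differentiable, strictly increasing function A : ℝ → ℝ whose range is exactly the interval (−2, ∞), with A(1) = 0 and A(exp(t)) = A(t) + 1 for all t ∈ ℝ. -/
open Real Filter

namespace Superlog

/-- The gluing function: `g s = e^s - 1` for `s ≤ 0`, `g s = s` for `s ≥ 0`,
defined as an integral so that `C¹` is easy. -/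
noncomputable def g (s : ℝ) : ℝ := ∫ u in (0:ℝ)..s, Real.exp (min u 0)

lemma g_cont_integrand : Continuous fun u : ℝ => Real.exp (min u 0) :=
  Real.continuous_exp.comp (continuous_id.min continuous_const)

lemma g_hasDerivAt (s : ℝ) : HasDerivAt g (Real.exp (min s 0)) s :=
  (g_cont_integrand.integral_hasStrictDerivAt 0 s).hasDerivAt

lemma g_of_nonpos {s : ℝ} (hs : s ≤ 0) : g s = Real.exp s - 1 := by
  have h : Set.EqOn (fun u : ℝ => Real.exp (min u 0)) Real.exp (Set.uIcc 0 s) := by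
    intro u hu
    rw [Set.uIcc_of_ge hs] at hu
    simp [min_eq_left hu.2]
  rw [g, intervalIntegral.integral_congr h, integral_exp, Real.exp_zero]

lemma g_of_nonneg {s : ℝ} (hs : 0 ≤ s) : g s = s := by
  have h : Set.EqOn (fun u : ℝ => Real.exp (min u 0)) (fun _ => (1:ℝ)) (Set.uIcc 0 s) := by
    intro u hu
    rw [Set.uIcc_of_le hs] at hu
    simp [min_eq_right hu.1, Real.exp_zero]
  rw [g, intervalIntegral.integral_congr h]
  simp

lemma exists_iter_log_nonpos (t : ℝ) : ∃ n : ℕ, Real.log^[n] t ≤ 0 := by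
  obtain ⟨m, hm⟩ := exists_nat_ge t
  induction m generalizing t with
  | zero => exact ⟨0, by simpa using hm⟩
  | succ m ih =>
      rcases le_or_gt t 0 with h | h
      · exact ⟨0, h⟩
      · have hlog : Real.log t ≤ m := by
          have := Real.log_le_sub_one_of_pos h
          push_cast at hm
          linarith
        obtain ⟨k, hk⟩ := ih (Real.log t) hlog
        exact ⟨k + 1, by rwa [Function.iterate_succ_apply]⟩

/-- The number of logs needed to reach a nonpositive value. -/
noncomputable def N (t : ℝ) : ℕ := Nat.find (exists_iter_log_nonpos t)

lemma N_spec (t : ℝ) : Real.log^[N t] t ≤ 0 := Nat.find_spec (exists_iter_log_nonpos t)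

lemma N_min {t : ℝ} {k : ℕ} (hk : k < N t) : 0 < Real.log^[k] t :=
  lt_of_not_ge (Nat.find_min (exists_iter_log_nonpos t) hk)

lemma N_eq_of {t : ℝ} {n : ℕ} (h1 : ∀ k < n, 0 < Real.log^[k] t)
    (h2 : Real.log^[n] t ≤ 0) : N t = n :=
  le_antisymm (Nat.find_le h2) (le_of_not_gt fun h => absurd (h1 _ h) (not_lt.2 (N_spec t)))

lemma N_exp (t : ℝ) : N (Real.exp t) = N t + 1 := by
  apply N_eq_of
  · intro k hk
    cases k with
    | zero => simpa using Real.exp_pos t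
    | succ k =>
        rw [Function.iterate_succ_apply, Real.log_exp]
        exact N_min (by omega)
  · rw [Function.iterate_succ_apply, Real.log_exp]
    exact N_spec t

/-- The super-logarithm. -/
noncomputable def A (t : ℝ) : ℝ := Real.exp (Real.log^[N t] t) + N t - 2

lemma A_exp (t : ℝ) : A (Real.exp t) = A t + 1 := by
  rw [A, A, N_exp, Function.iterate_succ_apply, Real.log_exp]
  push_cast
  ring

lemma A_one : A 1 = 0 := by
  have hN : N 1 = 1 := N_eq_of (by intro k hk; interval_cases k; norm_num) (by simp)
  rw [A, hN]
  norm_num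

/-- Local formula for `A` in terms of `g`. -/
lemma A_eq_g {t : ℝ} {n : ℕ} (h1 : ∀ k < n, 0 < Real.log^[k] t)
    (h2 : Real.log^[n] t < 1) : A t = g (Real.log^[n] t) + n - 1 := by
  rcases le_or_gt (Real.log^[n] t) 0 with hs | hs
  · have hN : N t = n := N_eq_of h1 hs
    rw [A, hN, g_of_nonpos hs]
    ring
  · have hN : N t = n + 1 := by
      apply N_eq_of
      · intro k hk
        rcases Nat.lt_succ_iff_lt_or_eq.1 hk with h | h
        · exact h1 _ h
        · rwa [h]
      · rw [Function.iterate_succ_apply']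
        exact le_of_lt (Real.log_neg hs h2)
    rw [A, hN, Function.iterate_succ_apply', Real.exp_log hs, g_of_nonneg hs.le]
    push_cast
    ring

lemma iter_log_contDiffAt {t : ℝ} {n : ℕ} (h : ∀ k < n, Real.log^[k] t ≠ 0) :
    ContDiffAt ℝ 1 (Real.log^[n]) t := by
  induction n with
  | zero => simpa using contDiffAt_id
  | succ n ih =>
      rw [Function.iterate_succ']
      exact (Real.contDiffAt_log.2 (h n (by omega))).comp t
        (ih fun k hk => h k (by omega))

lemma iter_log_hasDerivAt {t : ℝ} {n : ℕ} (h : ∀ k < n, 0 < Real.log^[k] t) :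
    ∃ d : ℝ, 0 < d ∧ HasDerivAt (Real.log^[n]) d t := by
  induction n with
  | zero => exact ⟨1, one_pos, by simpa using hasDerivAt_id t⟩
  | succ n ih =>
      obtain ⟨d, hd, hder⟩ := ih fun k hk => h k (by omega)
      have hpos : 0 < Real.log^[n] t := h n (by omega)
      refine ⟨(Real.log^[n] t)⁻¹ * d, by positivity, ?_⟩
      rw [Function.iterate_succ']
      exact (Real.hasDerivAt_log hpos.ne').comp t hder

/-- Near any point, `A` agrees with a nice local formula. -/
lemma A_eventually_eq (t : ℝ) :
    ∀ᶠ x in nhds t, A x = g (Real.log^[N t] x) + N t - 1 := by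
  set n := N t with hn
  have hiter : ∀ k < n, 0 < Real.log^[k] t := fun k hk => N_min hk
  have hcont : ContinuousAt (Real.log^[n]) t :=
    (iter_log_contDiffAt (n := n) fun k hk => (hiter k hk).ne').continuousAt
  have h2 : ∀ᶠ x in nhds t, Real.log^[n] x < 1 :=
    hcont.eventually_lt continuousAt_const (lt_of_le_of_lt (N_spec t) one_pos)
  have h1 : ∀ᶠ x in nhds t, ∀ k ∈ Finset.range n, 0 < Real.log^[k] x := by
    rw [eventually_all_finset]
    intro k hk
    rw [Finset.mem_range] at hk
    have hck : ContinuousAt (Real.log^[k]) t :=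
      (iter_log_contDiffAt (n := k) fun j hj =>
        (hiter j (lt_trans hj hk)).ne').continuousAt
    exact continuousAt_const.eventually_lt hck (hiter k hk)
  filter_upwards [h1, h2] with x hx1 hx2
  exact A_eq_g (fun k hk => hx1 k (Finset.mem_range.2 hk)) hx2


lemma g_contDiff : ContDiff ℝ 1 g := by
  rw [contDiff_one_iff_deriv]
  have hd : deriv g = fun s => Real.exp (min s 0) := funext fun s => (g_hasDerivAt s).deriv
  exact ⟨fun s => (g_hasDerivAt s).differentiableAt, by rw [hd]; exact g_cont_integrand⟩

lemma A_contDiff : ContDiff ℝ 1 A := by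
  rw [contDiff_iff_contDiffAt]
  intro t
  have hloc : ContDiffAt ℝ 1 (fun x => g (Real.log^[N t] x) + N t - 1) t := by
    have h1 : ContDiffAt ℝ 1 (Real.log^[N t]) t :=
      iter_log_contDiffAt fun k hk => (N_min hk).ne'
    exact ((g_contDiff.contDiffAt.comp t h1).add contDiffAt_const).sub contDiffAt_const
  exact hloc.congr_of_eventuallyEq (A_eventually_eq t)

lemma A_hasDerivAt (t : ℝ) : ∃ d : ℝ, 0 < d ∧ HasDerivAt A d t := by
  obtain ⟨d, hd, hder⟩ := iter_log_hasDerivAt (n := N t) fun k hk => N_min hk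
  set s := Real.log^[N t] t
  refine ⟨Real.exp (min s 0) * d, by positivity, ?_⟩
  have h : HasDerivAt (fun x => g (Real.log^[N t] x) + N t - 1) (Real.exp (min s 0) * d) t :=
    (((g_hasDerivAt s).comp t hder).add_const _).sub_const _
  exact h.congr_of_eventuallyEq (A_eventually_eq t)

lemma A_strictMono : StrictMono A := by
  apply strictMono_of_deriv_pos
  intro t
  obtain ⟨d, hd, hder⟩ := A_hasDerivAt t
  rwa [hder.deriv]

lemma A_of_nonpos {t : ℝ} (ht : t ≤ 0) : A t = Real.exp t - 2 := by
  have hN : N t = 0 := N_eq_of (by omega) (by simpa using ht)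
  rw [A, hN]
  simp

lemma A_gt (t : ℝ) : -2 < A t := by
  have h1 := Real.exp_pos (Real.log^[N t] t)
  have h2 : (0:ℝ) ≤ N t := Nat.cast_nonneg _
  rw [A]; linarith

lemma A_iter_exp (m : ℕ) : A (Real.exp^[m] 1) = m := by
  induction m with
  | zero => simpa using A_one
  | succ m ih =>
      rw [Function.iterate_succ_apply', A_exp, ih]
      push_cast
      ring

lemma A_range : Set.range A = Set.Ioi (-2 : ℝ) := by
  apply Set.eq_of_subset_of_subset
  · rintro y ⟨t, rfl⟩
    exact A_gt t
  · intro y hy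
    rw [Set.mem_Ioi] at hy
    obtain ⟨n, hn⟩ := exists_nat_gt (y + 2)⁻¹
    obtain ⟨m, hm⟩ := exists_nat_ge y
    have hy2 : (0:ℝ) < y + 2 := by linarith
    have hexp : Real.exp (-(n:ℝ)) < y + 2 := by
      have h1 : (y + 2)⁻¹ < Real.exp n := by
        calc (y + 2)⁻¹ < n := hn
          _ < (n:ℝ) + 1 := by linarith
          _ ≤ Real.exp n := Real.add_one_le_exp n
      rw [Real.exp_neg]
      exact inv_lt_of_inv_lt₀ hy2 h1
    have hlow : A (-(n:ℝ)) ≤ y := by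
      rw [A_of_nonpos (by simp : -(n:ℝ) ≤ 0)]
      linarith
    have hhigh : y ≤ A (Real.exp^[m] 1) := by rw [A_iter_exp]; exact hm
    have hle : -(n:ℝ) ≤ Real.exp^[m] 1 := by
      have : (0:ℝ) ≤ Real.exp^[m] 1 := by
        cases m with
        | zero => norm_num
        | succ m => rw [Function.iterate_succ_apply']; exact (Real.exp_pos _).le
      linarith [Nat.cast_nonneg (α := ℝ) n]
    have := intermediate_value_Icc hle (A_contDiff.continuous.continuousOn)
    obtain ⟨t, _, ht⟩ := this ⟨hlow, hhigh⟩
    exact ⟨t, ht⟩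

end Superlog

/-- There exists a continuously differentiable super-logarithm: a strictly
increasing `C¹` function `A : ℝ → ℝ` with range `(-2, ∞)`, `A 1 = 0`, and the
Abel functional equation `A (exp t) = A t + 1`. -/
theorem exists_C1_superlogarithm :
    ∃ A : ℝ → ℝ,
      ContDiff ℝ 1 A ∧
      StrictMono A ∧
      Set.range A = Set.Ioi (-2 : ℝ) ∧
      A 1 = 0 ∧
      (∀ t : ℝ, A (Real.exp t) = A t + 1) :=
  ⟨Superlog.A, Superlog.A_contDiff, Superlog.A_strictMono, Superlog.A_range,
    Superlog.A_one, Superlog.A_exp⟩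
end

section
/- Let T > −2 and let F be differentiable on (−2, ∞) with exp(F(t)) = F(t+1) for all t > −2. If F'(t) > 0 for all t ≥ T, then F'(t) > 0 for all t > −2. -/
/-- Infinite descent of positivity of the derivative for a differentiable
solution of the tetration equation `exp (F t) = F (t+1)` on `(-2, ∞)`: if the
derivative is positive from some point `T` on, it is positive everywhere. -/
theorem tetration_deriv_pos_descent (T : ℝ) (hT : -2 < T) (F : ℝ → ℝ)
    (hdiff : ∀ t : ℝ, -2 < t → DifferentiableAt ℝ F t)
    (hfe : ∀ t : ℝ, -2 < t → Real.exp (F t) = F (t + 1))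
    (hpos : ∀ t : ℝ, T ≤ t → 0 < deriv F t) :
    ∀ t : ℝ, -2 < t → 0 < deriv F t := by
  -- key step: for t > -2, deriv F (t+1) = exp (F t) * deriv F t
  have step : ∀ t : ℝ, -2 < t → 0 < deriv F (t + 1) → 0 < deriv F t := by
    intro t ht hpos1
    have heq : (fun s => Real.exp (F s)) =ᶠ[nhds t] (fun s => F (s + 1)) := by
      filter_upwards [isOpen_Ioi.mem_nhds (show t ∈ Set.Ioi (-2 : ℝ) from ht)]
        with s hs using hfe s hs
    have h1 : deriv (fun s => Real.exp (F s)) t = Real.exp (F t) * deriv F t := by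
      have := ((hdiff t ht).hasDerivAt.exp)
      simpa [mul_comm] using this.deriv
    have h2 : deriv (fun s => F (s + 1)) t = deriv F (t + 1) := by
      have ht1 : -2 < t + 1 := by linarith
      have := ((hdiff (t + 1) ht1).hasDerivAt.comp t
        ((hasDerivAt_id t).add_const 1))
      simpa [Function.comp_def] using this.deriv
    have h3 : Real.exp (F t) * deriv F t = deriv F (t + 1) := by
      rw [← h1, ← h2, heq.deriv_eq]
    have hE : 0 < Real.exp (F t) := Real.exp_pos _
    nlinarith [hE, hpos1]
  -- induction: for each n, if T ≤ t + n then 0 < deriv F t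
  have main : ∀ n : ℕ, ∀ t : ℝ, -2 < t → T ≤ t + n → 0 < deriv F t := by
    intro n
    induction n with
    | zero => intro t ht h; exact hpos t (by simpa using h)
    | succ n ih =>
      intro t ht h
      refine step t ht (ih (t + 1) (by linarith) ?_)
      push_cast at h ⊢
      linarith
  intro t ht
  obtain ⟨n, hn⟩ := exists_nat_ge (T - t)
  exact main n t ht (by linarith)
end

section
/- Let k ≥ 1 and let F_1, …, F_k : ℝ → ℝ be functions such that F_1 = exp, each F_i is injective, F_i(0) = 1 for all 1 ≤ i ≤ k, and for each 2 ≤ i ≤ k the functional equation F_i(x+1) = F_{i−1}(F_i(x)) holds for all x > −i. Then F_k(−j) = 1 − j for every integer j with 0 ≤ j ≤ k − 1. -/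
/-- Successorship of normalized hyper-operations: if `F 1 = exp`, each `F i`
(`1 ≤ i ≤ k`) is injective with `F i 0 = 1`, and `F i (x+1) = F (i-1) (F i x)`
for `x > -i` (`2 ≤ i ≤ k`), then `F k (-j) = 1 - j` for `0 ≤ j ≤ k - 1`. -/
theorem hyperoperation_successorship (k : ℕ) (hk : 1 ≤ k)
    (F : ℕ → ℝ → ℝ)
    (hF1 : F 1 = Real.exp)
    (hinj : ∀ i : ℕ, 1 ≤ i → i ≤ k → Function.Injective (F i))
    (hnorm : ∀ i : ℕ, 1 ≤ i → i ≤ k → F i 0 = 1)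
    (hrec : ∀ i : ℕ, 2 ≤ i → i ≤ k → ∀ x : ℝ, -(i : ℝ) < x →
      F i (x + 1) = F (i - 1) (F i x)) :
    ∀ j : ℕ, j ≤ k - 1 → F k (-(j : ℝ)) = 1 - (j : ℝ) := by
  have key : ∀ i : ℕ, 1 ≤ i → i ≤ k → ∀ j : ℕ, j < i →
      F i (-(j : ℝ)) = 1 - (j : ℝ) := by
    intro i
    induction i with
    | zero => omega
    | succ n ih =>
      intro h1 hk' j
      induction j with
      | zero => intro _; simpa using hnorm (n + 1) h1 hk'
      | succ m ihm =>
        intro hm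
        have h2 : 2 ≤ n + 1 := by omega
        have hgt : -((n + 1 : ℕ) : ℝ) < -((m : ℝ) + 1) := by
          have : (m : ℝ) + 1 < (n : ℝ) + 1 := by exact_mod_cast hm
          push_cast
          linarith
        have hrec' := hrec (n + 1) h2 hk' (-((m : ℝ) + 1)) hgt
        simp only [Nat.add_sub_cancel] at hrec'
        have e1 : -((m : ℝ) + 1) + 1 = -(m : ℝ) := by ring
        rw [e1] at hrec'
        have hL : F (n + 1) (-(m : ℝ)) = 1 - (m : ℝ) := ihm (by omega)
        have hR : F n (-(m : ℝ)) = 1 - (m : ℝ) := ih (by omega) (by omega) m (by omega)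
        have : F n (F (n + 1) (-((m : ℝ) + 1))) = F n (-(m : ℝ)) := by
          rw [← hrec', hL, hR]
        have h3 := hinj n (by omega) (by omega) this
        push_cast
        rw [show -((m : ℝ) + 1) = -(m:ℝ) + -1 by ring] at h3 ⊢
        rw [h3]; ring
  intro j hj
  exact key k hk le_rfl j (by omega)
end

section
/- Let a ∈ ℝ, let G : ℝ → ℝ be differentiable with G'(x) > 0 for all x ∈ ℝ, and let H be differentiable on (a, ∞) with H(t+1) = G(H(t)) for all t > a. If there is T > a such that H'(t) > 0 for all t ≥ T, then H'(t) > 0 for all t > a. -/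
/-- Infinite descent of positivity of the derivative: if `H (t+1) = G (H t)`
on `(a, ∞)` with `G` everywhere differentiable with positive derivative, `H`
differentiable on `(a, ∞)`, and `H' > 0` from some `T > a` on, then `H' > 0`
on all of `(a, ∞)`. -/
theorem deriv_pos_descent (a : ℝ) (G H : ℝ → ℝ)
    (hG_diff : Differentiable ℝ G)
    (hG_pos : ∀ x : ℝ, 0 < deriv G x)
    (hH_diff : ∀ t : ℝ, a < t → DifferentiableAt ℝ H t)
    (hrec : ∀ t : ℝ, a < t → H (t + 1) = G (H t))
    (hT : ∃ T : ℝ, a < T ∧ ∀ t : ℝ, T ≤ t → 0 < deriv H t) :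
    ∀ t : ℝ, a < t → 0 < deriv H t := by
  have key : ∀ t : ℝ, a < t → deriv H (t + 1) = deriv G (H t) * deriv H t := by
    intro t ht
    have hev : (fun s => H (s + 1)) =ᶠ[nhds t] (fun s => G (H s)) := by
      filter_upwards [Ioi_mem_nhds ht] with s hs
      exact hrec s hs
    have h1 : deriv (fun s => H (s + 1)) t = deriv (fun s => G (H s)) t :=
      hev.deriv_eq
    rw [deriv_comp_add_const] at h1
    rw [h1]
    exact deriv_comp t (hG_diff (H t)) (hH_diff t ht)
  obtain ⟨T, hTa, hTpos⟩ := hT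
  have main : ∀ n : ℕ, ∀ t : ℝ, a < t → T ≤ t + n → 0 < deriv H t := by
    intro n
    induction n with
    | zero => intro t ht hle; exact hTpos t (by simpa using hle)
    | succ n ih =>
      intro t ht hle
      have h1 : 0 < deriv H (t + 1) := by
        apply ih (t + 1) (by linarith)
        push_cast at hle ⊢
        linarith
      rw [key t ht] at h1
      have := hG_pos (H t)
      nlinarith
  intro t ht
  obtain ⟨n, hn⟩ := exists_nat_ge (T - t)
  exact main n t ht (by linarith)
end
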